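/- arXiv:1504.04489 — 3 statements merged into one kernel-verified Lean document; each statement's English description precedes it below -/
import Mathlib

section
/- Under the clustered Gaussian regression model, for any two indices i ≠ j the marginal covariance of the responses is Cov(y_i, y_j) = (x_iᵀ T x_j) · P(c_i = c_j). -/
open MeasureTheory ProbabilityTheory

open MeasureTheory ProbabilityTheory Real
open scoped NNReal ENNReal

namespace CGRAux

lemma integrable_exp_half : Integrable (fun x : ℝ => Real.exp (-(2⁻¹:ℝ) * x ^ 2)) :=
  integrable_exp_neg_mul_sq (by norm_num)

lemma integrable_mul_exp_half : Integrable (fun x : ℝ => x * Real.exp (-(2⁻¹:ℝ) * x ^ 2)) :=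
  integrable_mul_exp_neg_mul_sq (by norm_num)

lemma integrable_sq_mul_exp_half : Integrable (fun x : ℝ => x ^ 2 * Real.exp (-(2⁻¹:ℝ) * x ^ 2)) := by
  have h := integrable_rpow_mul_exp_neg_mul_sq (b := (2⁻¹:ℝ)) (by norm_num) (s := 2) (by norm_num)
  have e : ∀ x : ℝ, x ^ (2:ℝ) = x ^ (2:ℕ) := fun x => by
    rw [show (2:ℝ) = ((2:ℕ):ℝ) by norm_num, Real.rpow_natCast]
  simpa [e] using h

lemma integral_exp_half : ∫ x : ℝ, Real.exp (-(2⁻¹:ℝ) * x ^ 2) = Real.sqrt (2 * Real.pi) := by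
  rw [integral_gaussian]
  norm_num
  ring

lemma integral_mul_exp_half : ∫ x : ℝ, x * Real.exp (-(2⁻¹:ℝ) * x ^ 2) = 0 := by
  have hderiv : ∀ x : ℝ, HasDerivAt (fun y : ℝ => -Real.exp (-(2⁻¹:ℝ) * y ^ 2))
      (x * Real.exp (-(2⁻¹:ℝ) * x ^ 2)) x := by
    intro x
    have h1 := (((hasDerivAt_pow 2 x).const_mul (-(2⁻¹:ℝ))).exp).neg
    refine h1.congr_deriv ?_
    simp; ring
  exact integral_eq_zero_of_hasDerivAt_of_integrable hderiv integrable_mul_exp_half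
    integrable_exp_half.neg

lemma integral_sq_mul_exp_half :
    ∫ x : ℝ, x ^ 2 * Real.exp (-(2⁻¹:ℝ) * x ^ 2) = Real.sqrt (2 * Real.pi) := by
  have hderiv : ∀ x : ℝ, HasDerivAt (fun y : ℝ => -(y * Real.exp (-(2⁻¹:ℝ) * y ^ 2)))
      (x ^ 2 * Real.exp (-(2⁻¹:ℝ) * x ^ 2) - Real.exp (-(2⁻¹:ℝ) * x ^ 2)) x := by
    intro x
    have h1 := (((hasDerivAt_id x).mul (((hasDerivAt_pow 2 x).const_mul (-(2⁻¹:ℝ))).exp)).neg)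
    refine h1.congr_deriv ?_
    simp; ring
  have h0 := integral_eq_zero_of_hasDerivAt_of_integrable hderiv
    (integrable_sq_mul_exp_half.sub integrable_exp_half) integrable_mul_exp_half.neg
  rw [integral_sub integrable_sq_mul_exp_half integrable_exp_half, integral_exp_half] at h0
  linarith


-- transfer integrals against gaussianReal 0 1 to weighted Lebesgue integrals
lemma gaussianPDF_eq_coe (m : ℝ) (v : ℝ≥0) :
    gaussianPDF m v = fun x => ((fun y => Real.toNNReal (gaussianPDFReal m v y)) x : ℝ≥0∞) := by
  funext x; rfl

lemma pdf01_eq (x : ℝ) :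
    gaussianPDFReal 0 1 x = (Real.sqrt (2 * Real.pi))⁻¹ * Real.exp (-(2⁻¹:ℝ) * x ^ 2) := by
  rw [gaussianPDFReal]
  norm_num
  left
  ring_nf

lemma integral_N01 (g : ℝ → ℝ) :
    ∫ x, g x ∂(gaussianReal 0 1) = ∫ x, gaussianPDFReal 0 1 x * g x := by
  rw [gaussianReal_of_var_ne_zero 0 one_ne_zero, gaussianPDF_eq_coe,
    integral_withDensity_eq_integral_smul
      ((measurable_gaussianPDFReal 0 1).real_toNNReal) g]
  congr 1; funext x
  rw [NNReal.smul_def, Real.coe_toNNReal _ (gaussianPDFReal_nonneg 0 1 x), smul_eq_mul]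

lemma integrable_N01 (g : ℝ → ℝ) :
    Integrable g (gaussianReal 0 1) ↔ Integrable (fun x => gaussianPDFReal 0 1 x * g x) := by
  rw [gaussianReal_of_var_ne_zero 0 one_ne_zero, gaussianPDF_eq_coe,
    integrable_withDensity_iff_integrable_smul
      ((measurable_gaussianPDFReal 0 1).real_toNNReal)]
  constructor <;> intro h <;> refine h.congr (Filter.Eventually.of_forall fun x => ?_) <;>
    simp [NNReal.smul_def, Real.coe_toNNReal _ (gaussianPDFReal_nonneg 0 1 x)]

lemma integrable_id_N01 : Integrable (fun x : ℝ => x) (gaussianReal 0 1) := by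
  rw [integrable_N01]
  have : (fun x : ℝ => gaussianPDFReal 0 1 x * x)
      = fun x => (Real.sqrt (2 * Real.pi))⁻¹ * (x * Real.exp (-(2⁻¹:ℝ) * x ^ 2)) := by
    funext x; rw [pdf01_eq]; ring
  rw [this]
  exact integrable_mul_exp_half.const_mul _

lemma integrable_sq_N01 : Integrable (fun x : ℝ => x ^ 2) (gaussianReal 0 1) := by
  rw [integrable_N01]
  have : (fun x : ℝ => gaussianPDFReal 0 1 x * x ^ 2)
      = fun x => (Real.sqrt (2 * Real.pi))⁻¹ * (x ^ 2 * Real.exp (-(2⁻¹:ℝ) * x ^ 2)) := by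
    funext x; rw [pdf01_eq]; ring
  rw [this]
  exact integrable_sq_mul_exp_half.const_mul _

lemma sqrt_two_pi_ne : Real.sqrt (2 * Real.pi) ≠ 0 :=
  ne_of_gt (Real.sqrt_pos.2 (by positivity))

lemma integral_id_N01 : ∫ x, x ∂(gaussianReal 0 1) = 0 := by
  rw [integral_N01]
  have : (fun x : ℝ => gaussianPDFReal 0 1 x * x)
      = fun x => (Real.sqrt (2 * Real.pi))⁻¹ * (x * Real.exp (-(2⁻¹:ℝ) * x ^ 2)) := by
    funext x; rw [pdf01_eq]; ring
  rw [this, integral_const_mul, integral_mul_exp_half, mul_zero]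

lemma integral_sq_N01 : ∫ x, x ^ 2 ∂(gaussianReal 0 1) = 1 := by
  rw [integral_N01]
  have : (fun x : ℝ => gaussianPDFReal 0 1 x * x ^ 2)
      = fun x => (Real.sqrt (2 * Real.pi))⁻¹ * (x ^ 2 * Real.exp (-(2⁻¹:ℝ) * x ^ 2)) := by
    funext x; rw [pdf01_eq]; ring
  rw [this, integral_const_mul, integral_sq_mul_exp_half, inv_mul_cancel₀ sqrt_two_pi_ne]

lemma memLp_two_id_N01 : MemLp (fun x : ℝ => x) 2 (gaussianReal 0 1) :=
  (memLp_two_iff_integrable_sq aestronglyMeasurable_id).2 integrable_sq_N01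

-- affine representation
lemma gaussianReal_eq_map (m : ℝ) (v : ℝ≥0) :
    gaussianReal m v
      = (gaussianReal 0 1).map (fun x => Real.sqrt v * x + m) := by
  have h1 : (gaussianReal 0 1).map (fun x => Real.sqrt v * x) = gaussianReal 0 v := by
    rw [show (fun x : ℝ => Real.sqrt v * x) = (Real.sqrt v * ·) from rfl,
      gaussianReal_map_const_mul]
    congr 1
    · simp
    · ext : 1
      simp [Real.sq_sqrt v.coe_nonneg]
  have h2 : (fun x : ℝ => Real.sqrt v * x + m)
      = (· + m) ∘ (fun x => Real.sqrt v * x) := rfl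
  rw [h2, ← Measure.map_map (measurable_add_const m) (measurable_const_mul _), h1,
    gaussianReal_map_add_const, zero_add]

lemma memLp_two_id_gaussianReal (m : ℝ) (v : ℝ≥0) :
    MemLp (fun x : ℝ => x) 2 (gaussianReal m v) := by
  rw [gaussianReal_eq_map]
  rw [memLp_map_measure_iff (g := fun x : ℝ => x) aestronglyMeasurable_id
    ((measurable_const_mul _).add_const m).aemeasurable]
  exact (memLp_two_id_N01.const_mul (Real.sqrt v)).add (memLp_const m)

lemma integral_id_gaussianReal (m : ℝ) (v : ℝ≥0) :
    ∫ x, x ∂(gaussianReal m v) = m := by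
  rw [gaussianReal_eq_map,
    integral_map ((measurable_const_mul _).add_const m).aemeasurable (f := fun x : ℝ => x) aestronglyMeasurable_id]
  have int2 : Integrable (fun x : ℝ => Real.sqrt v * x) (gaussianReal 0 1) :=
    integrable_id_N01.const_mul _
  rw [integral_add int2 (integrable_const m), integral_const_mul, integral_id_N01, integral_const]
  simp

lemma integral_sq_gaussianReal (m : ℝ) (v : ℝ≥0) :
    ∫ x, x ^ 2 ∂(gaussianReal m v) = (v : ℝ) + m ^ 2 := by
  rw [gaussianReal_eq_map,
    integral_map ((measurable_const_mul _).add_const m).aemeasurable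
      (f := fun x : ℝ => x ^ 2) (measurable_id.pow_const 2).aestronglyMeasurable]
  have e : ∀ x : ℝ, (Real.sqrt v * x + m) ^ 2
      = (v : ℝ) * x ^ 2 + (2 * Real.sqrt v * m) * x + m ^ 2 := by
    intro x
    have : Real.sqrt v * Real.sqrt v = (v : ℝ) := Real.mul_self_sqrt v.coe_nonneg
    ring_nf
    nlinarith [this]
  simp only [e]
  have int1 : Integrable (fun x : ℝ => (v:ℝ) * x ^ 2) (gaussianReal 0 1) :=
    integrable_sq_N01.const_mul _
  have int2 : Integrable (fun x : ℝ => (2 * Real.sqrt v * m) * x) (gaussianReal 0 1) :=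
    integrable_id_N01.const_mul _
  have int12 : Integrable (fun x : ℝ => (v:ℝ) * x ^ 2 + (2 * Real.sqrt v * m) * x)
      (gaussianReal 0 1) := int1.add int2
  rw [integral_add int12 (integrable_const _), integral_add int1 int2,
    integral_const_mul, integral_const_mul, integral_sq_N01, integral_id_N01, integral_const]
  simp


variable {Ω : Type*} [MeasurableSpace Ω] {P : Measure Ω} [IsProbabilityMeasure P]

lemma gauss_mem (hXm : Measurable X) {m0 : ℝ} {v : ℝ≥0}
    (h : Measure.map X P = gaussianReal m0 v) : MemLp X 2 P := by
  have h1 : MemLp (fun x : ℝ => x) 2 (Measure.map X P) := by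
    rw [h]; exact memLp_two_id_gaussianReal m0 v
  exact (memLp_map_measure_iff (g := fun x : ℝ => x) aestronglyMeasurable_id
    hXm.aemeasurable).1 h1

lemma gauss_mean {X : Ω → ℝ} (hXm : Measurable X) {m0 : ℝ} {v : ℝ≥0}
    (h : Measure.map X P = gaussianReal m0 v) : ∫ ω, X ω ∂P = m0 := by
  rw [← integral_id_gaussianReal m0 v, ← h,
    integral_map hXm.aemeasurable (f := fun x : ℝ => x) aestronglyMeasurable_id]

lemma gauss_sq {X : Ω → ℝ} (hXm : Measurable X) {m0 : ℝ} {v : ℝ≥0}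
    (h : Measure.map X P = gaussianReal m0 v) : ∫ ω, (X ω) ^ 2 ∂P = (v : ℝ) + m0 ^ 2 := by
  rw [← integral_sq_gaussianReal m0 v, ← h,
    integral_map hXm.aemeasurable (f := fun x : ℝ => x ^ 2)
      (measurable_id.pow_const 2).aestronglyMeasurable]

lemma L2.mul_int {f g : Ω → ℝ} (hf : MemLp f 2 P) (hg : MemLp g 2 P) :
    Integrable (fun ω => f ω * g ω) P := by
  have h := hf.smul (φ := g) hg (r := 1)
  rw [memLp_one_iff_integrable] at h
  exact h.congr (Filter.Eventually.of_forall fun ω => by simp [smul_eq_mul, mul_comm])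

lemma sum_meas {κ : Type*} [Fintype κ] (g : κ → Set Ω) (hmeas : ∀ a, MeasurableSet (g a))
    (hdisj : Pairwise (Function.onFun Disjoint g)) :
    ∑ a, P (g a) = P (⋃ a, g a) := by
  rw [measure_iUnion hdisj hmeas, tsum_fintype]

lemma integral_ite (p : Ω → Prop) [DecidablePred p] (hp : MeasurableSet {ω | p ω}) :
    ∫ ω, (if p ω then (1:ℝ) else 0) ∂P = (P {ω | p ω}).toReal := by
  rw [← measureReal_def, ← integral_indicator_one hp]
  exact integral_congr_ae (Filter.Eventually.of_forall fun ω => by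
    simp [Set.indicator_apply])

end CGRAux

/-- Covariance of two real random variables. -/
noncomputable def cov {Ω : Type*} [MeasurableSpace Ω] (P : Measure Ω) (f g : Ω → ℝ) : ℝ :=
  (∫ ω, f ω * g ω ∂P) - (∫ ω, f ω ∂P) * (∫ ω, g ω ∂P)

/-- Under the clustered Gaussian regression model, for any two indices `i ≠ j` the marginal
covariance of the responses is `Cov(y i, y j) = (xᵢᵀ T xⱼ) * P(c i = c j)`. -/
theorem covariance_clustered_regression
    {Ω : Type*} [MeasurableSpace Ω] (P : Measure Ω) [IsProbabilityMeasure P]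
    (n k p : ℕ) (hn : 2 ≤ n) (hk : 1 ≤ k) (hp : 1 ≤ p)
    -- random cluster labels
    (c : Fin n → Ω → Fin k) (hc : ∀ i, Measurable (c i))
    -- cluster-specific Gaussian coefficient vectors
    (β : Fin k → Ω → (Fin p → ℝ)) (hβ : ∀ h, Measurable (β h))
    -- Gaussian errors
    (ε : Fin n → Ω → ℝ) (hε : ∀ i, Measurable (ε i))
    (μv : Fin p → ℝ) (T : Matrix (Fin p) (Fin p) ℝ) (hT : T.PosSemidef)
    (σ : ℝ) (hσ : 0 < σ)
    -- the β*'s are i.i.d. Gaussian with mean μv and covariance T :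
    -- independent, identically distributed, and every linear functional is Gaussian
    (hβindep : iIndepFun β P)
    (hβident : ∀ h h', Measure.map (β h) P = Measure.map (β h') P)
    (hβgauss : ∀ h (a : Fin p → ℝ),
      Measure.map (fun ω => ∑ l, a l * β h ω l) P
        = gaussianReal (∑ l, a l * μv l)
            (Real.toNNReal (∑ l, ∑ m, a l * T l m * a m)))
    -- the ε's are i.i.d. N(0, σ²)
    (hεindep : iIndepFun ε P)
    (hεgauss : ∀ i, Measure.map (ε i) P = gaussianReal 0 (Real.toNNReal (σ ^ 2)))
    -- the label vector, the β family and the ε family are mutually independent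
    (hmut : Measure.map
        (fun ω => ((fun i => c i ω, fun h => β h ω, fun i => ε i ω) :
          (Fin n → Fin k) × (Fin k → Fin p → ℝ) × (Fin n → ℝ))) P
      = (Measure.map (fun ω (i : Fin n) => c i ω) P).prod
          ((Measure.map (fun ω (h : Fin k) => β h ω) P).prod
            (Measure.map (fun ω (i : Fin n) => ε i ω) P)))
    -- fixed covariates and responses
    (x : Fin n → Fin p → ℝ)
    (y : Fin n → Ω → ℝ)
    (hy : ∀ i ω, y i ω = (∑ l, x i l * β (c i ω) ω l) + ε i ω)
    (i j : Fin n) (hij : i ≠ j) :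
    cov P (y i) (y j)
      = (∑ l, ∑ m, x i l * T l m * x j m) * (P {ω | c i ω = c j ω}).toReal := by
  classical
  have hβm : ∀ (h : Fin k) (l : Fin p), Measurable fun ω => β h ω l :=
    fun h l => (measurable_pi_apply l).comp (hβ h)
  have hcs : ∀ (r : Fin n) (h : Fin k), MeasurableSet {ω | c r ω = h} :=
    fun r h => (hc r) (measurableSet_singleton h)
  have hcs2 : ∀ (h h' : Fin k), MeasurableSet {ω | c i ω = h ∧ c j ω = h'} :=
    fun h h' => (hcs i h).inter (hcs j h')
  have hms : ∀ (r : Fin n) (h : Fin k), MeasurableSet {cc : Fin n → Fin k | cc r = h} := by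
    intro r h
    have e : {cc : Fin n → Fin k | cc r = h} = (fun cc : Fin n → Fin k => cc r) ⁻¹' {h} := rfl
    rw [e]
    exact measurable_pi_apply r (measurableSet_singleton h)
  have hmbb : ∀ (h : Fin k) (l : Fin p), Measurable fun bb : Fin k → Fin p → ℝ => bb h l :=
    fun h l => (measurable_pi_apply l).comp (measurable_pi_apply h)
  -- PSD facts
  have hq : ∀ a : Fin p → ℝ, 0 ≤ ∑ l, ∑ m', a l * T l m' * a m' := by
    intro a
    have h2 := hT.dotProduct_mulVec_nonneg a
    have e : dotProduct (star a) (Matrix.mulVec T a) = ∑ l, ∑ m', a l * T l m' * a m' := by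
      simp only [dotProduct, Matrix.mulVec, Pi.star_apply, star_trivial]
      exact Finset.sum_congr rfl fun l _ => by
        rw [Finset.mul_sum]; exact Finset.sum_congr rfl fun m' _ => by
          ring
    rwa [e] at h2
  have hTsym : ∀ l m', T m' l = T l m' := by
    intro l m'
    have h1 := congrFun (congrFun hT.1 l) m'
    simpa [Matrix.conjTranspose_apply] using h1
  -- single coordinate gaussian law
  have hmap1 : ∀ (h : Fin k) (l : Fin p),
      Measure.map (fun ω => β h ω l) P = gaussianReal (μv l) (Real.toNNReal (T l l)) := by
    intro h l
    have h1 := hβgauss h (fun t => if t = l then (1:ℝ) else 0)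
    have e1 : (fun ω => ∑ t : Fin p, (if t = l then (1:ℝ) else 0) * β h ω t) = fun ω => β h ω l := by
      funext ω; simp
    have e2 : (∑ t : Fin p, (if t = l then (1:ℝ) else 0) * μv t) = μv l := by simp
    have e3 : (∑ t : Fin p, ∑ s : Fin p, (if t = l then (1:ℝ) else 0) * T t s * (if s = l then (1:ℝ) else 0)) = T l l := by
      simp
    rw [e1, e2, e3] at h1
    exact h1
  have hTll : ∀ l, 0 ≤ T l l := by
    intro l
    have := hq (fun t => if t = l then (1:ℝ) else 0)
    simpa using this
  have hβL2 : ∀ h l, MemLp (fun ω => β h ω l) 2 P :=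
    fun h l => CGRAux.gauss_mem (hβm h l) (hmap1 h l)
  have hβmean : ∀ h l, ∫ ω, β h ω l ∂P = μv l :=
    fun h l => CGRAux.gauss_mean (hβm h l) (hmap1 h l)
  have hβsq : ∀ h l, ∫ ω, (β h ω l) ^ 2 ∂P = T l l + (μv l) ^ 2 := by
    intro h l
    have h1 := CGRAux.gauss_sq (hβm h l) (hmap1 h l)
    rwa [Real.coe_toNNReal _ (hTll l)] at h1
  -- pairwise sums gaussian law
  have hmap2 : ∀ (h : Fin k) (l m' : Fin p),
      Measure.map (fun ω => β h ω l + β h ω m') P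
        = gaussianReal (μv l + μv m')
            (Real.toNNReal (T l l + T l m' + T m' l + T m' m')) := by
    intro h l m'
    have h1 := hβgauss h (fun t => (if t = l then (1:ℝ) else 0) + (if t = m' then (1:ℝ) else 0))
    have e1 : (fun ω => ∑ t : Fin p, ((if t = l then (1:ℝ) else 0) + (if t = m' then (1:ℝ) else 0)) * β h ω t)
        = fun ω => β h ω l + β h ω m' := by
      funext ω; simp [add_mul, Finset.sum_add_distrib]
    have e2 : (∑ t : Fin p, ((if t = l then (1:ℝ) else 0) + (if t = m' then (1:ℝ) else 0)) * μv t) = μv l + μv m' := by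
      simp [add_mul, Finset.sum_add_distrib]
    have e3 : (∑ t : Fin p, ∑ s : Fin p, ((if t = l then (1:ℝ) else 0) + (if t = m' then (1:ℝ) else 0)) * T t s *
          ((if s = l then (1:ℝ) else 0) + (if s = m' then (1:ℝ) else 0)))
        = T l l + T l m' + T m' l + T m' m' := by
      simp [add_mul, mul_add, Finset.sum_add_distrib]
      ring
    rw [e1, e2, e3] at h1
    exact h1
  have hββint : ∀ (h h' : Fin k) (l m' : Fin p),
      Integrable (fun ω => β h ω l * β h' ω m') P :=
    fun h h' l m' => CGRAux.L2.mul_int (hβL2 h l) (hβL2 h' m')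
  have hββ_same : ∀ (h : Fin k) (l m' : Fin p),
      ∫ ω, β h ω l * β h ω m' ∂P = T l m' + μv l * μv m' := by
    intro h l m'
    have hnn : 0 ≤ T l l + T l m' + T m' l + T m' m' := by
      have h0 := hq (fun t => (if t = l then (1:ℝ) else 0) + (if t = m' then (1:ℝ) else 0))
      have e3 : (∑ t : Fin p, ∑ s : Fin p, ((if t = l then (1:ℝ) else 0) + (if t = m' then (1:ℝ) else 0)) * T t s *
            ((if s = l then (1:ℝ) else 0) + (if s = m' then (1:ℝ) else 0)))
          = T l l + T l m' + T m' l + T m' m' := by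
        simp [add_mul, mul_add, Finset.sum_add_distrib]
        ring
      rwa [e3] at h0
    have h2 := CGRAux.gauss_sq ((hβm h l).add (hβm h m')) (hmap2 h l m')
    rw [Real.coe_toNNReal _ hnn] at h2
    simp only [Pi.add_apply] at h2
    have hint_ll : Integrable (fun ω => (β h ω l) ^ 2) P :=
      (memLp_two_iff_integrable_sq (hβm h l).aestronglyMeasurable).1 (hβL2 h l)
    have hint_mm : Integrable (fun ω => (β h ω m') ^ 2) P :=
      (memLp_two_iff_integrable_sq (hβm h m').aestronglyMeasurable).1 (hβL2 h m')
    have hint_lm : Integrable (fun ω => 2 * (β h ω l * β h ω m')) P :=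
      (hββint h h l m').const_mul 2
    have e : (fun ω => (β h ω l + β h ω m') ^ 2)
        = fun ω => (β h ω l) ^ 2 + (2 * (β h ω l * β h ω m') + (β h ω m') ^ 2) := by
      funext ω; ring
    have hint2 : Integrable (fun ω => 2 * (β h ω l * β h ω m') + (β h ω m') ^ 2) P :=
      hint_lm.add hint_mm
    rw [e, integral_add hint_ll hint2, integral_add hint_lm hint_mm,
      integral_const_mul, hβsq h l, hβsq h m'] at h2
    have hs := hTsym l m'
    nlinarith [h2]
  have hββ : ∀ (h h' : Fin k) (l m' : Fin p),
      ∫ ω, β h ω l * β h' ω m' ∂P = (if h = h' then T l m' else 0) + μv l * μv m' := by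
    intro h h' l m'
    by_cases hhh : h = h'
    · subst hhh; rw [if_pos rfl]; exact hββ_same h l m'
    · rw [if_neg hhh, zero_add]
      have hind : IndepFun (fun ω => β h ω l) (fun ω => β h' ω m') P :=
        (hβindep.indepFun hhh).comp (measurable_pi_apply l) (measurable_pi_apply m')
      rw [hind.integral_fun_mul_eq_mul_integral (hβm h l).aestronglyMeasurable (hβm h' m').aestronglyMeasurable,
        hβmean h l, hβmean h' m']
  -- ε moments
  have hεL2 : ∀ r, MemLp (ε r) 2 P := fun r => CGRAux.gauss_mem (hε r) (hεgauss r)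
  have hεmean : ∀ r, ∫ ω, ε r ω ∂P = 0 := fun r => CGRAux.gauss_mean (hε r) (hεgauss r)
  -- families and independence
  have hC : Measurable (fun ω (r : Fin n) => c r ω) := measurable_pi_lambda _ hc
  have hB : Measurable (fun ω (h : Fin k) => β h ω) := measurable_pi_lambda _ hβ
  have hE : Measurable (fun ω (r : Fin n) => ε r ω) := measurable_pi_lambda _ hε
  haveI hPC : IsProbabilityMeasure (Measure.map (fun ω (r : Fin n) => c r ω) P) :=
    Measure.isProbabilityMeasure_map hC.aemeasurable
  haveI hPB : IsProbabilityMeasure (Measure.map (fun ω (h : Fin k) => β h ω) P) :=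
    Measure.isProbabilityMeasure_map hB.aemeasurable
  haveI hPE : IsProbabilityMeasure (Measure.map (fun ω (r : Fin n) => ε r ω) P) :=
    Measure.isProbabilityMeasure_map hE.aemeasurable
  have htrip : Measurable (fun ω => ((fun r => c r ω, fun h => β h ω, fun r => ε r ω) :
      (Fin n → Fin k) × (Fin k → Fin p → ℝ) × (Fin n → ℝ))) := hC.prodMk (hB.prodMk hE)
  have hCB : Measure.map (fun ω => ((fun r => c r ω, fun h => β h ω) :
        (Fin n → Fin k) × (Fin k → Fin p → ℝ))) P
      = (Measure.map (fun ω (r : Fin n) => c r ω) P).prod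
          (Measure.map (fun ω (h : Fin k) => β h ω) P) := by
    have h1 : (fun ω => ((fun r => c r ω, fun h => β h ω) :
          (Fin n → Fin k) × (Fin k → Fin p → ℝ)))
        = (Prod.map id Prod.fst) ∘ (fun ω => ((fun r => c r ω, fun h => β h ω, fun r => ε r ω) :
          (Fin n → Fin k) × (Fin k → Fin p → ℝ) × (Fin n → ℝ))) := rfl
    rw [h1, ← Measure.map_map (measurable_id.prodMap measurable_fst) htrip, hmut,
      ← Measure.map_prod_map _ _ measurable_id measurable_fst, Measure.map_id]
    congr 1
    exact Measure.fst_prod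
  have hICB : IndepFun (fun ω (r : Fin n) => c r ω) (fun ω (h : Fin k) => β h ω) P :=
    (indepFun_iff_map_prod_eq_prod_map_map hC.aemeasurable hB.aemeasurable).2 hCB
  have hCBE : Measure.map (fun ω =>
        ((((fun r => c r ω, fun h => β h ω) :
          (Fin n → Fin k) × (Fin k → Fin p → ℝ))), (fun r => ε r ω : Fin n → ℝ))) P
      = (Measure.map (fun ω => ((fun r => c r ω, fun h => β h ω) :
          (Fin n → Fin k) × (Fin k → Fin p → ℝ))) P).prod
          (Measure.map (fun ω (r : Fin n) => ε r ω) P) := by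
    have h1 : (fun ω =>
          ((((fun r => c r ω, fun h => β h ω) :
            (Fin n → Fin k) × (Fin k → Fin p → ℝ))), (fun r => ε r ω : Fin n → ℝ)))
        = (MeasurableEquiv.prodAssoc.symm) ∘
          (fun ω => ((fun r => c r ω, fun h => β h ω, fun r => ε r ω) :
            (Fin n → Fin k) × (Fin k → Fin p → ℝ) × (Fin n → ℝ))) := rfl
    rw [h1, ← Measure.map_map MeasurableEquiv.prodAssoc.symm.measurable htrip, hmut, hCB,
      ← Measure.prodAssoc_prod, MeasurableEquiv.map_symm_map]
  have hICBE : IndepFun (fun ω => ((fun r => c r ω, fun h => β h ω) :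
        (Fin n → Fin k) × (Fin k → Fin p → ℝ))) (fun ω (r : Fin n) => ε r ω) P :=
    (indepFun_iff_map_prod_eq_prod_map_map (hC.prodMk hB).aemeasurable hE.aemeasurable).2 hCBE
  -- notation
  set S : ℝ := ∑ l, ∑ m, x i l * T l m * x j m with hSdef
  set W : Fin n → Fin k → Ω → ℝ :=
    fun r h ω => (if c r ω = h then (1:ℝ) else 0) * ∑ l, x r l * β h ω l with hWdef
  have hWm : ∀ r h, Measurable (W r h) := by
    intro r h
    apply Measurable.mul
    · exact Measurable.ite ((hc r) (measurableSet_singleton h)) measurable_const measurable_const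
    · exact Finset.measurable_sum _ fun l _ => (hβm h l).const_mul (x r l)
  have hAL2 : ∀ (r : Fin n) (h : Fin k), MemLp (fun ω => ∑ l, x r l * β h ω l) 2 P := by
    intro r h
    have h1 := memLp_finset_sum' (μ := P) (p := 2) Finset.univ
      (fun (l : Fin p) _ => (hβL2 h l).const_mul (x r l))
    refine h1.ae_eq (Filter.Eventually.of_forall fun ω => ?_)
    simp
  have hWint : ∀ r h, Integrable (W r h) P := by
    intro r h
    refine Integrable.bdd_mul (c := 1) ((hAL2 r h).integrable one_le_two)
      (Measurable.ite ((hc r) (measurableSet_singleton h)) measurable_const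
        measurable_const).aestronglyMeasurable (Filter.Eventually.of_forall fun ω => ?_)
    by_cases hcr : c r ω = h <;> simp [hcr]
  have hAmean : ∀ (r : Fin n) (h : Fin k),
      ∫ ω, (∑ l, x r l * β h ω l) ∂P = ∑ l, x r l * μv l := by
    intro r h
    rw [integral_finset_sum _ fun l _ => ((hβL2 h l).integrable one_le_two).const_mul (x r l)]
    exact Finset.sum_congr rfl fun l _ => by rw [integral_const_mul, hβmean h l]
  have hiW : ∀ (r : Fin n) (h : Fin k),
      ∫ ω, W r h ω ∂P = (P {ω | c r ω = h}).toReal * ∑ l, x r l * μv l := by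
    intro r h
    have hind : IndepFun (fun ω => if c r ω = h then (1:ℝ) else 0)
        (fun ω => ∑ l, x r l * β h ω l) P := by
      exact hICB.comp (φ := fun cc : Fin n → Fin k => if cc r = h then (1:ℝ) else 0)
        (ψ := fun bb : Fin k → Fin p → ℝ => ∑ l, x r l * bb h l)
        (Measurable.ite (hms r h) measurable_const measurable_const)
        (Finset.measurable_sum _ fun l _ => (hmbb h l).const_mul (x r l))
    have h1 := hind.integral_fun_mul_eq_mul_integral
      (Measurable.ite ((hc r) (measurableSet_singleton h)) measurable_const
        measurable_const).aestronglyMeasurable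
      (Finset.measurable_sum _ fun l _ => (hβm h l).const_mul (x r l)).aestronglyMeasurable
    calc ∫ ω, W r h ω ∂P
        = ∫ ω, (if c r ω = h then (1:ℝ) else 0) * ∑ l, x r l * β h ω l ∂P := rfl
      _ = (∫ ω, (if c r ω = h then (1:ℝ) else 0) ∂P) * ∫ ω, (∑ l, x r l * β h ω l) ∂P := h1
      _ = (P {ω | c r ω = h}).toReal * ∑ l, x r l * μv l := by
          rw [CGRAux.integral_ite (fun ω => c r ω = h) (hcs r h), hAmean]
  -- second moment of the A's
  have hiAA : ∀ h h' : Fin k,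
      ∫ ω, (∑ l, x i l * β h ω l) * (∑ l, x j l * β h' ω l) ∂P
        = (if h = h' then S else 0) + (∑ l, x i l * μv l) * (∑ l, x j l * μv l) := by
    intro h h'
    have e : (fun ω => (∑ l, x i l * β h ω l) * (∑ l, x j l * β h' ω l))
        = fun ω => ∑ l, ∑ m', (x i l * x j m') * (β h ω l * β h' ω m') := by
      funext ω
      rw [Finset.sum_mul_sum]
      exact Finset.sum_congr rfl fun l _ => Finset.sum_congr rfl fun m' _ => by ring
    rw [e, integral_finset_sum _ fun l _ =>
      integrable_finset_sum _ fun m' _ => (hββint h h' l m').const_mul _]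
    have e2 : ∀ l, ∫ ω, (∑ m', (x i l * x j m') * (β h ω l * β h' ω m')) ∂P
        = ∑ m', (x i l * x j m') * ((if h = h' then T l m' else 0) + μv l * μv m') := by
      intro l
      rw [integral_finset_sum _ fun m' _ => (hββint h h' l m').const_mul _]
      exact Finset.sum_congr rfl fun m' _ => by rw [integral_const_mul, hββ h h' l m']
    rw [Finset.sum_congr rfl fun l _ => e2 l]
    have split : ∑ l, ∑ m', (x i l * x j m') * ((if h = h' then T l m' else 0) + μv l * μv m')
        = (∑ l, ∑ m', (x i l * x j m') * (if h = h' then T l m' else 0))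
          + ∑ l, ∑ m', (x i l * x j m') * (μv l * μv m') := by
      simp [mul_add, Finset.sum_add_distrib]
    rw [split]
    congr 1
    · by_cases hhh : h = h'
      · simp only [hhh, if_true]
        exact Finset.sum_congr rfl fun l _ => Finset.sum_congr rfl fun m' _ => by ring
      · simp [hhh]
    · rw [Finset.sum_mul_sum]
      exact Finset.sum_congr rfl fun l _ => Finset.sum_congr rfl fun m' _ => by ring
  -- product of two W's
  have hiWW : ∀ h h' : Fin k,
      ∫ ω, W i h ω * W j h' ω ∂P
        = (P {ω | c i ω = h ∧ c j ω = h'}).toReal *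
            ((if h = h' then S else 0) + (∑ l, x i l * μv l) * (∑ l, x j l * μv l)) := by
    intro h h'
    have e : (fun ω => W i h ω * W j h' ω)
        = fun ω => ((if c i ω = h then (1:ℝ) else 0) * (if c j ω = h' then (1:ℝ) else 0)) *
            ((∑ l, x i l * β h ω l) * (∑ l, x j l * β h' ω l)) := by
      funext ω; simp only [hWdef]; ring
    have hmφ : Measurable (fun cc : Fin n → Fin k =>
        (if cc i = h then (1:ℝ) else 0) * (if cc j = h' then (1:ℝ) else 0)) :=
      (Measurable.ite (hms i h) measurable_const measurable_const).mul
      (Measurable.ite (hms j h') measurable_const measurable_const)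
    have hmψ : Measurable (fun bb : Fin k → Fin p → ℝ =>
        (∑ l, x i l * bb h l) * (∑ l, x j l * bb h' l)) :=
      (Finset.measurable_sum _ fun l _ => (hmbb h l).const_mul (x i l)).mul
      (Finset.measurable_sum _ fun l _ => (hmbb h' l).const_mul (x j l))
    have hind : IndepFun
        (fun ω => (if c i ω = h then (1:ℝ) else 0) * (if c j ω = h' then (1:ℝ) else 0))
        (fun ω => (∑ l, x i l * β h ω l) * (∑ l, x j l * β h' ω l)) P :=
      hICB.comp hmφ hmψ
    have h1 := hind.integral_fun_mul_eq_mul_integral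
      ((Measurable.ite ((hc i) (measurableSet_singleton h)) measurable_const
          measurable_const).mul
        (Measurable.ite ((hc j) (measurableSet_singleton h')) measurable_const
          measurable_const)).aestronglyMeasurable
      ((Finset.measurable_sum _ fun l _ => (hβm h l).const_mul (x i l)).mul
        (Finset.measurable_sum _ fun l _ => (hβm h' l).const_mul (x j l))).aestronglyMeasurable
    have e4 : (fun ω => (if c i ω = h then (1:ℝ) else 0) * (if c j ω = h' then (1:ℝ) else 0))
        = fun ω => (if c i ω = h ∧ c j ω = h' then (1:ℝ) else 0) := by
      funext ω
      by_cases h5 : c i ω = h <;> by_cases h6 : c j ω = h' <;> simp [h5, h6]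
    rw [show (∫ ω, W i h ω * W j h' ω ∂P) = ∫ ω, ((if c i ω = h then (1:ℝ) else 0) *
        (if c j ω = h' then (1:ℝ) else 0)) *
        ((∑ l, x i l * β h ω l) * (∑ l, x j l * β h' ω l)) ∂P from congrArg _ e,
      h1, hiAA h h']
    congr 1
    rw [show (∫ ω, (if c i ω = h then (1:ℝ) else 0) * (if c j ω = h' then (1:ℝ) else 0) ∂P)
        = ∫ ω, (if c i ω = h ∧ c j ω = h' then (1:ℝ) else 0) ∂P from congrArg _ e4]
    exact CGRAux.integral_ite (fun ω => c i ω = h ∧ c j ω = h') (hcs2 h h')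
  -- W times ε
  have hiWε : ∀ h : Fin k, ∫ ω, W i h ω * ε j ω ∂P = 0 := by
    intro h
    have hmφ : Measurable (fun q : (Fin n → Fin k) × (Fin k → Fin p → ℝ) =>
        (if q.1 i = h then (1:ℝ) else 0) * ∑ l, x i l * q.2 h l) :=
      (Measurable.ite (measurableSet_eq_fun (by fun_prop) measurable_const) measurable_const
        measurable_const).mul (by fun_prop)
    have hind : IndepFun (W i h) (ε j) P :=
      hICBE.comp hmφ (measurable_pi_apply j)
    rw [hind.integral_fun_mul_eq_mul_integral (hWm i h).aestronglyMeasurable (hε j).aestronglyMeasurable,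
      hεmean j, mul_zero]
  have hiεW : ∀ h' : Fin k, ∫ ω, ε i ω * W j h' ω ∂P = 0 := by
    intro h'
    have hmφ : Measurable (fun q : (Fin n → Fin k) × (Fin k → Fin p → ℝ) =>
        (if q.1 j = h' then (1:ℝ) else 0) * ∑ l, x j l * q.2 h' l) :=
      (Measurable.ite (measurableSet_eq_fun (by fun_prop) measurable_const) measurable_const
        measurable_const).mul (by fun_prop)
    have hind : IndepFun (ε i) (W j h') P :=
      (hICBE.comp hmφ (measurable_pi_apply i)).symm
    rw [hind.integral_fun_mul_eq_mul_integral (hε i).aestronglyMeasurable (hWm j h').aestronglyMeasurable,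
      hεmean i, zero_mul]
  have hiεε : ∫ ω, ε i ω * ε j ω ∂P = 0 := by
    rw [(hεindep.indepFun hij).integral_fun_mul_eq_mul_integral (hε i).aestronglyMeasurable
      (hε j).aestronglyMeasurable, hεmean i, zero_mul]
  -- integrability of products
  have hWWint : ∀ h h' : Fin k, Integrable (fun ω => W i h ω * W j h' ω) P := by
    intro h h'
    have e : (fun ω => W i h ω * W j h' ω)
        = fun ω => ((if c i ω = h then (1:ℝ) else 0) * (if c j ω = h' then (1:ℝ) else 0)) *
            ((∑ l, x i l * β h ω l) * (∑ l, x j l * β h' ω l)) := by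
      funext ω; simp only [hWdef]; ring
    rw [e]
    refine Integrable.bdd_mul (c := 1) (CGRAux.L2.mul_int (hAL2 i h) (hAL2 j h'))
      (((Measurable.ite ((hc i) (measurableSet_singleton h)) measurable_const
          measurable_const).mul
        (Measurable.ite ((hc j) (measurableSet_singleton h')) measurable_const
          measurable_const)).aestronglyMeasurable) (Filter.Eventually.of_forall fun ω => ?_)
    by_cases h5 : c i ω = h <;> by_cases h6 : c j ω = h' <;> simp [h5, h6]
  have hWεint : ∀ h : Fin k, Integrable (fun ω => W i h ω * ε j ω) P := by
    intro h
    have e : (fun ω => W i h ω * ε j ω)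
        = fun ω => (if c i ω = h then (1:ℝ) else 0) * ((∑ l, x i l * β h ω l) * ε j ω) := by
      funext ω; simp only [hWdef]; ring
    rw [e]
    refine Integrable.bdd_mul (c := 1) (CGRAux.L2.mul_int (hAL2 i h) (hεL2 j))
      ((Measurable.ite ((hc i) (measurableSet_singleton h)) measurable_const
        measurable_const).aestronglyMeasurable) (Filter.Eventually.of_forall fun ω => ?_)
    by_cases h5 : c i ω = h <;> simp [h5]
  have hεWint : ∀ h' : Fin k, Integrable (fun ω => ε i ω * W j h' ω) P := by
    intro h'
    have e : (fun ω => ε i ω * W j h' ω)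
        = fun ω => (if c j ω = h' then (1:ℝ) else 0) * (ε i ω * ∑ l, x j l * β h' ω l) := by
      funext ω; simp only [hWdef]; ring
    rw [e]
    refine Integrable.bdd_mul (c := 1) (CGRAux.L2.mul_int (hεL2 i) (hAL2 j h'))
      ((Measurable.ite ((hc j) (measurableSet_singleton h')) measurable_const
        measurable_const).aestronglyMeasurable) (Filter.Eventually.of_forall fun ω => ?_)
    by_cases h5 : c j ω = h' <;> simp [h5]
  have hεεint : Integrable (fun ω => ε i ω * ε j ω) P := CGRAux.L2.mul_int (hεL2 i) (hεL2 j)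
  -- decomposition of y
  have hyW : ∀ (r : Fin n) ω, y r ω = (∑ h, W r h ω) + ε r ω := by
    intro r ω
    rw [hy]
    congr 1
    simp only [hWdef]
    rw [eq_comm]
    simp [ite_mul]
  -- partition identities
  have hsum1 : ∀ r : Fin n, ∑ h, (P {ω | c r ω = h}).toReal = 1 := by
    intro r
    rw [← ENNReal.toReal_sum (fun h _ => measure_ne_top P _)]
    rw [CGRAux.sum_meas (fun h => {ω | c r ω = h}) (fun h => hcs r h) ?disj]
    case disj =>
      intro a b hab
      simp only [Function.onFun, Set.disjoint_left]
      intro ω ha hb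
      exact hab (ha ▸ hb ▸ rfl)
    rw [show (⋃ h, {ω | c r ω = h}) = Set.univ from Set.eq_univ_of_forall fun ω =>
      Set.mem_iUnion.2 ⟨c r ω, rfl⟩, measure_univ, ENNReal.toReal_one]
  have hdiag : ∑ h, (P {ω | c i ω = h ∧ c j ω = h}).toReal
      = (P {ω | c i ω = c j ω}).toReal := by
    rw [← ENNReal.toReal_sum (fun h _ => measure_ne_top P _)]
    congr 1
    rw [CGRAux.sum_meas (fun h => {ω | c i ω = h ∧ c j ω = h}) (fun h => hcs2 h h) ?disj2]
    case disj2 =>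
      intro a b hab
      simp only [Function.onFun, Set.disjoint_left]
      intro ω ha hb
      exact hab (ha.1 ▸ hb.1 ▸ rfl)
    congr 1
    ext ω
    simp only [Set.mem_iUnion, Set.mem_setOf_eq]
    constructor
    · rintro ⟨h, h1, h2⟩; rw [h1, h2]
    · intro h1; exact ⟨c j ω, h1, rfl⟩
  have hrow : ∀ h : Fin k, ∑ h' , (P {ω | c i ω = h ∧ c j ω = h'}).toReal
      = (P {ω | c i ω = h}).toReal := by
    intro h
    rw [← ENNReal.toReal_sum (fun h' _ => measure_ne_top P _)]
    congr 1
    rw [CGRAux.sum_meas (fun h' => {ω | c i ω = h ∧ c j ω = h'}) (fun h' => hcs2 h h') ?disj3]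
    case disj3 =>
      intro a b hab
      simp only [Function.onFun, Set.disjoint_left]
      intro ω ha hb
      exact hab (ha.2 ▸ hb.2 ▸ rfl)
    congr 1
    ext ω
    simp only [Set.mem_iUnion, Set.mem_setOf_eq]
    constructor
    · rintro ⟨h', h1, h2⟩; exact h1
    · intro h1; exact ⟨c j ω, h1, rfl⟩
  -- first moments of y
  have hiy : ∀ r : Fin n, ∫ ω, y r ω ∂P = ∑ l, x r l * μv l := by
    intro r
    simp only [hyW]
    rw [integral_add (integrable_finset_sum _ fun h _ => hWint r h)
      ((hεL2 r).integrable one_le_two), integral_finset_sum _ fun h _ => hWint r h,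
      hεmean r, add_zero]
    rw [Finset.sum_congr rfl fun h _ => hiW r h, ← Finset.sum_mul, hsum1 r, one_mul]
  -- second moment
  have hiyy : ∫ ω, y i ω * y j ω ∂P
      = S * (P {ω | c i ω = c j ω}).toReal
        + (∑ l, x i l * μv l) * (∑ l, x j l * μv l) := by
    have e : ∀ ω, y i ω * y j ω
        = (∑ h, ∑ h', W i h ω * W j h' ω)
          + ((∑ h, W i h ω * ε j ω) + ((∑ h', ε i ω * W j h' ω) + ε i ω * ε j ω)) := by
      intro ω
      rw [hyW i ω, hyW j ω, add_mul, mul_add, mul_add, Finset.sum_mul_sum,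
        Finset.sum_mul, Finset.mul_sum]
      ring
    simp only [e]
    have int1 : Integrable (fun ω => ∑ h, ∑ h', W i h ω * W j h' ω) P :=
      integrable_finset_sum _ fun h _ => integrable_finset_sum _ fun h' _ => hWWint h h'
    have int2 : Integrable (fun ω => ∑ h, W i h ω * ε j ω) P :=
      integrable_finset_sum _ fun h _ => hWεint h
    have int3 : Integrable (fun ω => ∑ h', ε i ω * W j h' ω) P :=
      integrable_finset_sum _ fun h' _ => hεWint h'
    have int4 : Integrable (fun ω => (∑ h', ε i ω * W j h' ω) + ε i ω * ε j ω) P :=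
      int3.add hεεint
    have int5 : Integrable (fun ω => (∑ h, W i h ω * ε j ω)
        + ((∑ h', ε i ω * W j h' ω) + ε i ω * ε j ω)) P := int2.add int4
    rw [integral_add int1 int5, integral_add int2 int4,
      integral_add int3 hεεint, hiεε,
      integral_finset_sum _ fun h _ => hWεint h,
      integral_finset_sum _ fun h' _ => hεWint h',
      Finset.sum_congr rfl fun h _ => hiWε h,
      Finset.sum_congr rfl fun h' _ => hiεW h',
      Finset.sum_const]
    simp only [smul_zero, add_zero]
    rw [integral_finset_sum _ fun h _ => integrable_finset_sum _ fun h' _ => hWWint h h']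
    rw [Finset.sum_congr rfl fun h _ =>
      (integral_finset_sum _ fun h' _ => hWWint h h').trans
        (Finset.sum_congr rfl fun h' _ => hiWW h h')]
    -- algebra
    have expand : ∀ (h h' : Fin k),
        (P {ω | c i ω = h ∧ c j ω = h'}).toReal *
            ((if h = h' then S else 0) + (∑ l, x i l * μv l) * (∑ l, x j l * μv l))
          = (if h = h' then (P {ω | c i ω = h ∧ c j ω = h'}).toReal * S else 0)
            + (P {ω | c i ω = h ∧ c j ω = h'}).toReal *
                ((∑ l, x i l * μv l) * (∑ l, x j l * μv l)) := by
      intro h h'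
      by_cases hhh : h = h' <;> simp [hhh, mul_add]
    rw [Finset.sum_congr rfl fun h _ => Finset.sum_congr rfl fun h' _ => expand h h']
    rw [Finset.sum_congr rfl fun h _ => Finset.sum_add_distrib]
    rw [Finset.sum_add_distrib]
    congr 1
    · -- diagonal part
      have inner : ∀ h : Fin k,
          (∑ h', if h = h' then (P {ω | c i ω = h ∧ c j ω = h'}).toReal * S else 0)
            = (P {ω | c i ω = h ∧ c j ω = h}).toReal * S := by
        intro h
        rw [Finset.sum_ite_eq]
        simp
      rw [Finset.sum_congr rfl fun h _ => inner h, ← Finset.sum_mul, hdiag, mul_comm]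
    · -- off part
      rw [Finset.sum_congr rfl fun h _ => (Finset.sum_mul ..).symm]
      rw [Finset.sum_congr rfl fun h _ => by rw [hrow h]]
      rw [← Finset.sum_mul, hsum1 i, one_mul]
  -- conclusion
  show (∫ ω, y i ω * y j ω ∂P) - (∫ ω, y i ω ∂P) * ∫ ω, y j ω ∂P = S * _
  rw [hiyy, hiy i, hiy j]
  ring
end

section
/- (Proposition 1, intercept-only case) In the clustered Gaussian model without covariates, for any two indices i ≠ j the marginal correlation of the responses is Corr(y_i, y_j) = (τ²/(τ² + σ²)) · P(c_i = c_j). -/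
open MeasureTheory ProbabilityTheory

/-- Variance of a real random variable. -/
noncomputable def var {Ω : Type*} [MeasurableSpace Ω] (P : Measure Ω) (f : Ω → ℝ) : ℝ :=
  cov P f f

/-- Correlation of two real random variables. -/
noncomputable def corr {Ω : Type*} [MeasurableSpace Ω] (P : Measure Ω) (f g : Ω → ℝ) : ℝ :=
  cov P f g / (Real.sqrt (var P f) * Real.sqrt (var P g))


open Real Set
open scoped NNReal ENNReal

open scoped NNReal ENNReal

section GaussAux
variable {v : ℝ≥0}

lemma pdf0_eq (x : ℝ) :
    gaussianPDFReal 0 v x = (Real.sqrt (2 * Real.pi * v))⁻¹ * Real.exp (-(((2:ℝ) * v)⁻¹) * x ^ 2) := by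
  rw [gaussianPDFReal]
  congr 2
  rw [sub_zero]
  rw [neg_div, neg_mul, inv_mul_eq_div]

lemma integrable_id_mul_pdf0 (hv : v ≠ 0) :
    Integrable (fun x => x * gaussianPDFReal 0 v x) := by
  have hv' : (0:ℝ) < (v:ℝ) := by exact_mod_cast pos_iff_ne_zero.mpr hv
  have hb : (0:ℝ) < ((2:ℝ) * v)⁻¹ := by positivity
  have h := (integrable_mul_exp_neg_mul_sq hb).const_mul ((Real.sqrt (2 * Real.pi * v))⁻¹)
  exact h.congr (by
    filter_upwards with x
    rw [pdf0_eq]; ring)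

lemma integrable_sq_mul_pdf0 (hv : v ≠ 0) :
    Integrable (fun x => x ^ 2 * gaussianPDFReal 0 v x) := by
  have hv' : (0:ℝ) < (v:ℝ) := by exact_mod_cast pos_iff_ne_zero.mpr hv
  have hb : (0:ℝ) < ((2:ℝ) * v)⁻¹ := by positivity
  have h := ((integrable_rpow_mul_exp_neg_mul_sq hb (by norm_num : (-1:ℝ) < 2)).const_mul
    ((Real.sqrt (2 * Real.pi * v))⁻¹))
  exact h.congr (by
    filter_upwards with x
    rw [pdf0_eq]
    rw [show ((2:ℝ)) = ((2:ℕ):ℝ) by norm_num, Real.rpow_natCast]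
    push_cast
    ring)

lemma integral_id_mul_pdf0 (hv : v ≠ 0) :
    ∫ x, x * gaussianPDFReal 0 v x = 0 := by
  have hpdf : ∀ x : ℝ, gaussianPDFReal 0 v (-x) = gaussianPDFReal 0 v x := by
    intro x; rw [pdf0_eq, pdf0_eq, neg_pow]; norm_num
  have h1 : (∫ x : ℝ, (-x) * gaussianPDFReal 0 v (-x))
      = ∫ x, x * gaussianPDFReal 0 v x :=
    (Measure.measurePreserving_neg _).integral_comp
      (Homeomorph.neg ℝ).measurableEmbedding (fun t => t * gaussianPDFReal 0 v t)
  have h2 : (∫ x : ℝ, (-x) * gaussianPDFReal 0 v (-x))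
      = - ∫ x, x * gaussianPDFReal 0 v x := by
    rw [← integral_neg]
    congr 1 with x
    rw [hpdf]; ring
  have := h1.symm.trans h2
  linarith

lemma integral_sq_mul_pdf0 (hv : v ≠ 0) :
    ∫ x, x ^ 2 * gaussianPDFReal 0 v x = v := by
  have hv' : (0:ℝ) < (v:ℝ) := by exact_mod_cast pos_iff_ne_zero.mpr hv
  have h2v : (0:ℝ) < 2 * v := by positivity
  have hb : (0:ℝ) < ((2:ℝ) * v)⁻¹ := by positivity
  set C : ℝ := (Real.sqrt (2 * Real.pi * v))⁻¹ with hC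
  calc ∫ x, x ^ 2 * gaussianPDFReal 0 v x
      = ∫ x, (fun t => t ^ 2 * (C * Real.exp (-(((2:ℝ)*v)⁻¹) * t ^ 2))) |x| := by
        congr 1 with x
        simp only [pdf0_eq, sq_abs, hC]
    _ = 2 * ∫ t in Ioi (0:ℝ), t ^ 2 * (C * Real.exp (-(((2:ℝ)*v)⁻¹) * t ^ 2)) :=
        integral_comp_abs (f := fun t => t ^ 2 * (C * Real.exp (-(((2:ℝ)*v)⁻¹) * t ^ 2)))
    _ = 2 * (C * ∫ t in Ioi (0:ℝ), t ^ (2:ℝ) * Real.exp (-(((2:ℝ)*v)⁻¹) * t ^ (2:ℝ))) := by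
        congr 1
        rw [← integral_const_mul]
        refine setIntegral_congr_fun measurableSet_Ioi (fun t ht => ?_)
        rw [show ((2:ℝ)) = ((2:ℕ):ℝ) by norm_num, Real.rpow_natCast]
        push_cast; ring
    _ = 2 * (C * ((((2:ℝ)*v)⁻¹) ^ (-((2:ℝ) + 1) / 2) * (1 / 2) * Real.Gamma (((2:ℝ) + 1) / 2))) := by
        rw [integral_rpow_mul_exp_neg_mul_rpow (by norm_num) (by norm_num) hb]
    _ = (v:ℝ) := by
        have hGamma : Real.Gamma (((2:ℝ) + 1) / 2) = Real.sqrt Real.pi / 2 := by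
          rw [show ((2:ℝ) + 1)/2 = 1/2 + 1 by norm_num, Real.Gamma_add_one (by norm_num),
            Real.Gamma_one_half_eq]
          ring
        have e1 : (((2:ℝ)*v)⁻¹) ^ (-((2:ℝ) + 1) / 2) = (2*v) * Real.sqrt (2*(v:ℝ)) := by
          rw [Real.inv_rpow h2v.le, ← Real.rpow_neg h2v.le,
            show -(-((2:ℝ) + 1) / 2) = 1 + 1/2 by norm_num,
            Real.rpow_add h2v, Real.rpow_one, ← Real.sqrt_eq_rpow]
        have e2 : Real.sqrt (2 * Real.pi * v) = Real.sqrt Real.pi * Real.sqrt (2*(v:ℝ)) := by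
          rw [show 2 * Real.pi * (v:ℝ) = Real.pi * (2*(v:ℝ)) by ring,
            Real.sqrt_mul Real.pi_nonneg]
        have hπ : Real.sqrt Real.pi ≠ 0 := by positivity
        have hs2v : Real.sqrt (2*(v:ℝ)) ≠ 0 := by positivity
        rw [hGamma, e1, hC, e2]
        field_simp
end GaussAux

section GaussMoments
variable {v : ℝ≥0}

lemma gaussPDF_coe : gaussianPDF 0 v = fun x => ((gaussianPDFReal 0 v x).toNNReal : ℝ≥0∞) := rfl

lemma smul_eq_pdf_mul (g : ℝ → ℝ) (x : ℝ) :
    (gaussianPDFReal 0 v x).toNNReal • g x = g x * gaussianPDFReal 0 v x := by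
  rw [NNReal.smul_def, Real.coe_toNNReal _ (gaussianPDFReal_nonneg _ _ _), smul_eq_mul, mul_comm]

lemma gauss0_integrable_id (hv : v ≠ 0) : Integrable (fun x => x) (gaussianReal 0 v) := by
  rw [gaussianReal_of_var_ne_zero _ hv, gaussPDF_coe,
    integrable_withDensity_iff_integrable_smul (measurable_gaussianPDFReal 0 v).real_toNNReal]
  exact (integrable_id_mul_pdf0 hv).congr
    (by filter_upwards with x; exact (smul_eq_pdf_mul (fun x => x) x).symm)

lemma gauss0_integral_id (hv : v ≠ 0) : ∫ x, x ∂(gaussianReal 0 v) = 0 := by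
  rw [gaussianReal_of_var_ne_zero _ hv, gaussPDF_coe,
    integral_withDensity_eq_integral_smul (measurable_gaussianPDFReal 0 v).real_toNNReal
      (fun x => x)]
  have h : (∫ x : ℝ, (gaussianPDFReal 0 v x).toNNReal • x)
      = ∫ x : ℝ, x * gaussianPDFReal 0 v x :=
    integral_congr_ae (by filter_upwards with x; exact smul_eq_pdf_mul (fun x => x) x)
  rw [h, integral_id_mul_pdf0 hv]

lemma gauss0_integrable_sq (hv : v ≠ 0) : Integrable (fun x => x ^ 2) (gaussianReal 0 v) := by
  rw [gaussianReal_of_var_ne_zero _ hv, gaussPDF_coe,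
    integrable_withDensity_iff_integrable_smul (measurable_gaussianPDFReal 0 v).real_toNNReal]
  exact (integrable_sq_mul_pdf0 hv).congr
    (by filter_upwards with x; exact (smul_eq_pdf_mul (fun x => x ^ 2) x).symm)

lemma gauss0_integral_sq (hv : v ≠ 0) : ∫ x, x ^ 2 ∂(gaussianReal 0 v) = v := by
  rw [gaussianReal_of_var_ne_zero _ hv, gaussPDF_coe,
    integral_withDensity_eq_integral_smul (measurable_gaussianPDFReal 0 v).real_toNNReal
      (fun x => x ^ 2)]
  have h : (∫ x : ℝ, (gaussianPDFReal 0 v x).toNNReal • x ^ 2)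
      = ∫ x : ℝ, x ^ 2 * gaussianPDFReal 0 v x :=
    integral_congr_ae (by filter_upwards with x; exact smul_eq_pdf_mul (fun x => x ^ 2) x)
  rw [h, integral_sq_mul_pdf0 hv]

lemma gauss_map_shift (m : ℝ) :
    Measure.map (fun x => x + m) (gaussianReal 0 v) = gaussianReal m v := by
  simpa using gaussianReal_map_add_const (μ := 0) (v := v) m

lemma gauss_integrable_id (m : ℝ) (hv : v ≠ 0) :
    Integrable (fun x => x) (gaussianReal m v) := by
  rw [← gauss_map_shift m,
    integrable_map_measure (f := fun x : ℝ => x + m) (g := fun x : ℝ => x)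
      measurable_id.aestronglyMeasurable ((measurable_id.add_const m).aemeasurable)]
  exact ((gauss0_integrable_id hv).add (integrable_const m)).congr (by rfl)

lemma gauss_integral_id (m : ℝ) (hv : v ≠ 0) : ∫ x, x ∂(gaussianReal m v) = m := by
  rw [← gauss_map_shift m,
    integral_map (φ := fun x : ℝ => x + m) (f := fun x : ℝ => x)
      ((measurable_id.add_const m).aemeasurable) measurable_id.aestronglyMeasurable]
  rw [show (∫ x, x + m ∂(gaussianReal 0 v)) = (∫ x, x ∂(gaussianReal 0 v)) + m from by
    rw [integral_add (gauss0_integrable_id hv) (integrable_const m), integral_const,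
      probReal_univ, one_smul]]
  rw [gauss0_integral_id hv, zero_add]

lemma gauss_integrable_sq (m : ℝ) (hv : v ≠ 0) :
    Integrable (fun x => x ^ 2) (gaussianReal m v) := by
  rw [← gauss_map_shift m,
    integrable_map_measure (f := fun x : ℝ => x + m) (g := fun x : ℝ => x ^ 2)
      (measurable_id.pow_const 2).aestronglyMeasurable
      ((measurable_id.add_const m).aemeasurable)]
  have h : Integrable (fun x => x ^ 2 + ((2 * m) * x + m ^ 2)) (gaussianReal 0 v) :=
    (gauss0_integrable_sq hv).add (((gauss0_integrable_id hv).const_mul (2*m)).add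
      (integrable_const (m ^ 2)))
  exact h.congr (by filter_upwards with x; simp only [Function.comp]; ring)

lemma gauss_integral_sq (m : ℝ) (hv : v ≠ 0) :
    ∫ x, x ^ 2 ∂(gaussianReal m v) = m ^ 2 + v := by
  rw [← gauss_map_shift m,
    integral_map (φ := fun x : ℝ => x + m) (f := fun x : ℝ => x ^ 2)
      ((measurable_id.add_const m).aemeasurable)
      (measurable_id.pow_const 2).aestronglyMeasurable]
  have h1 : (∫ x, (x + m) ^ 2 ∂(gaussianReal 0 v))
      = ∫ x, x ^ 2 + ((2 * m) * x + m ^ 2) ∂(gaussianReal 0 v) := by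
    congr 1 with x; ring
  have hg1 : Integrable (fun x => (2 * m) * x + m ^ 2) (gaussianReal 0 v) :=
    ((gauss0_integrable_id hv).const_mul (2*m)).add (integrable_const (m ^ 2))
  have hg2 : Integrable (fun x => (2 * m) * x) (gaussianReal 0 v) :=
    (gauss0_integrable_id hv).const_mul (2*m)
  rw [h1, integral_add (gauss0_integrable_sq hv) hg1,
    integral_add hg2 (integrable_const (m ^ 2)),
    integral_const_mul, gauss0_integral_sq hv, gauss0_integral_id hv, integral_const,
    probReal_univ, one_smul]
  ring

end GaussMoments


section IndAux
variable {n k : ℕ}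

/-- indicator that the label of unit `p` equals `a`. -/
noncomputable def clInd (p : Fin n) (a : Fin k) (C : Fin n → Fin k) : ℝ :=
  if C p = a then 1 else 0

lemma clInd_meas (p : Fin n) (a : Fin k) : Measurable (clInd p a) := by
  unfold clInd
  have h1 : Measurable fun C : Fin n → Fin k => C p := measurable_pi_apply p
  have hs : MeasurableSet {C : Fin n → Fin k | C p = a} :=
    h1 (measurableSet_singleton a)
  exact Measurable.ite hs measurable_const measurable_const

lemma clInd_abs_le (p : Fin n) (a : Fin k) (C : Fin n → Fin k) : ‖clInd p a C‖ ≤ 1 := by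
  unfold clInd; split <;> simp

lemma clInd_mul_abs_le (p q : Fin n) (a b : Fin k) (C : Fin n → Fin k) :
    ‖clInd p a C * clInd q b C‖ ≤ 1 := by
  unfold clInd
  rcases ite_eq_or_eq (C p = a) (1:ℝ) 0 with h | h <;> rw [h] <;>
    rcases ite_eq_or_eq (C q = b) (1:ℝ) 0 with h' | h' <;> rw [h'] <;> norm_num

lemma sum_clInd (p : Fin n) (C : Fin n → Fin k) : ∑ a, clInd p a C = 1 := by
  simp [clInd, Finset.sum_ite_eq]

lemma sum_clInd_mul (p : Fin n) (C : Fin n → Fin k) (x : Fin k → ℝ) :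
    ∑ a, clInd p a C * x a = x (C p) := by
  simp [clInd, ite_mul, Finset.sum_ite_eq]

lemma sum_clInd_mul_clInd (p q : Fin n) (C : Fin n → Fin k) :
    ∑ a, clInd p a C * clInd q a C = if C p = C q then 1 else 0 := by
  simp only [clInd, ite_mul, one_mul, zero_mul, ← ite_and]
  by_cases h : C p = C q
  · rw [if_pos h, Finset.sum_eq_single (C p)]
    · simp [h.symm]
    · intro b _ hb
      rw [if_neg]
      rintro ⟨h1, _⟩
      exact hb h1.symm
    · simp
  · rw [if_neg h]
    refine Finset.sum_eq_zero fun a _ => ?_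
    rw [if_neg]
    rintro ⟨h1, h2⟩
    exact h (h1.trans h2.symm)

end IndAux

/-- (Proposition 1, intercept-only case) In the clustered Gaussian model without covariates,
for any two indices `i ≠ j`, `Corr(y i, y j) = (τ²/(τ² + σ²)) · P(cᵢ = cⱼ)`. -/
theorem correlation_clustered_intercept_only
    {Ω : Type*} [MeasurableSpace Ω] (P : Measure Ω) [IsProbabilityMeasure P]
    (n k : ℕ) (hn : 2 ≤ n) (hk : 1 ≤ k)
    -- random cluster labels
    (c : Fin n → Ω → Fin k) (hc : ∀ i, Measurable (c i))
    -- cluster-specific intercepts, i.i.d. N(μ, τ²)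
    (β : Fin k → Ω → ℝ) (hβ : ∀ h, Measurable (β h))
    -- Gaussian errors
    (ε : Fin n → Ω → ℝ) (hε : ∀ i, Measurable (ε i))
    (μv τ : ℝ) (hτ : 0 < τ) (σ : ℝ) (hσ : 0 < σ)
    (hβindep : iIndepFun (m := fun _ => inferInstance) β P)
    (hβgauss : ∀ h, Measure.map (β h) P = gaussianReal μv (Real.toNNReal (τ ^ 2)))
    -- the ε's are i.i.d. N(0, σ²)
    (hεindep : iIndepFun (m := fun _ => inferInstance) ε P)
    (hεgauss : ∀ i, Measure.map (ε i) P = gaussianReal 0 (Real.toNNReal (σ ^ 2)))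
    -- the label vector, the β family and the ε family are mutually independent
    (hmut : Measure.map
        (fun ω => ((fun i => c i ω, fun h => β h ω, fun i => ε i ω) :
          (Fin n → Fin k) × (Fin k → ℝ) × (Fin n → ℝ))) P
      = (Measure.map (fun ω (i : Fin n) => c i ω) P).prod
          ((Measure.map (fun ω (h : Fin k) => β h ω) P).prod
            (Measure.map (fun ω (i : Fin n) => ε i ω) P)))
    -- responses
    (y : Fin n → Ω → ℝ)
    (hy : ∀ i ω, y i ω = β (c i ω) ω + ε i ω)
    (i j : Fin n) (hij : i ≠ j) :
    corr P (y i) (y j) = (τ ^ 2 / (τ ^ 2 + σ ^ 2)) * (P {ω | c i ω = c j ω}).toReal := by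
  classical
  -- measurability of the bundled random vectors
  have hCm : Measurable (fun ω (p : Fin n) => c p ω) := measurable_pi_lambda _ hc
  have hBm : Measurable (fun ω (a : Fin k) => β a ω) := measurable_pi_lambda _ hβ
  have hEm : Measurable (fun ω (p : Fin n) => ε p ω) := measurable_pi_lambda _ hε
  have hTm : Measurable (fun ω => ((fun p => c p ω, fun a => β a ω, fun p => ε p ω) :
      (Fin n → Fin k) × (Fin k → ℝ) × (Fin n → ℝ))) := hCm.prodMk (hBm.prodMk hEm)
  haveI iC : IsProbabilityMeasure (Measure.map (fun ω (p : Fin n) => c p ω) P) :=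
    Measure.isProbabilityMeasure_map hCm.aemeasurable
  haveI iB : IsProbabilityMeasure (Measure.map (fun ω (a : Fin k) => β a ω) P) :=
    Measure.isProbabilityMeasure_map hBm.aemeasurable
  haveI iE : IsProbabilityMeasure (Measure.map (fun ω (p : Fin n) => ε p ω) P) :=
    Measure.isProbabilityMeasure_map hEm.aemeasurable
  have hτ2 : Real.toNNReal (τ ^ 2) ≠ 0 := by
    simp only [ne_eq, Real.toNNReal_eq_zero, not_le]; positivity
  have hσ2 : Real.toNNReal (σ ^ 2) ≠ 0 := by
    simp only [ne_eq, Real.toNNReal_eq_zero, not_le]; positivity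
  have hcoeτ : ((Real.toNNReal (τ ^ 2) : ℝ≥0) : ℝ) = τ ^ 2 := Real.coe_toNNReal _ (by positivity)
  have hcoeσ : ((Real.toNNReal (σ ^ 2) : ℝ≥0) : ℝ) = σ ^ 2 := Real.coe_toNNReal _ (by positivity)
  -- the key factorization formula
  have key : ∀ (f : (Fin n → Fin k) → ℝ) (g : (Fin k → ℝ) → ℝ) (h2 : (Fin n → ℝ) → ℝ),
      Measurable f → Measurable g → Measurable h2 →
      ∫ ω, f (fun p => c p ω) * (g (fun a => β a ω) * h2 (fun p => ε p ω)) ∂P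
        = (∫ ω, f (fun p => c p ω) ∂P) *
          ((∫ ω, g (fun a => β a ω) ∂P) * (∫ ω, h2 (fun p => ε p ω) ∂P)) := by
    intro f g h2 hf hg hh
    have hfgh : Measurable (fun q : (Fin n → Fin k) × (Fin k → ℝ) × (Fin n → ℝ) =>
        f q.1 * (g q.2.1 * h2 q.2.2)) :=
      (hf.comp measurable_fst).mul ((hg.comp (measurable_fst.comp measurable_snd)).mul
        (hh.comp (measurable_snd.comp measurable_snd)))
    have e1 : ∫ ω, f (fun p => c p ω) * (g (fun a => β a ω) * h2 (fun p => ε p ω)) ∂P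
        = ∫ q, f q.1 * (g q.2.1 * h2 q.2.2)
            ∂(Measure.map (fun ω => ((fun p => c p ω, fun a => β a ω, fun p => ε p ω) :
              (Fin n → Fin k) × (Fin k → ℝ) × (Fin n → ℝ))) P) :=
      (integral_map hTm.aemeasurable hfgh.aestronglyMeasurable).symm
    have e2 : ∫ q : (Fin n → Fin k) × (Fin k → ℝ) × (Fin n → ℝ), f q.1 * (g q.2.1 * h2 q.2.2)
          ∂((Measure.map (fun ω (p : Fin n) => c p ω) P).prod
            ((Measure.map (fun ω (a : Fin k) => β a ω) P).prod
              (Measure.map (fun ω (p : Fin n) => ε p ω) P)))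
        = (∫ C, f C ∂(Measure.map (fun ω (p : Fin n) => c p ω) P)) *
          ∫ r : (Fin k → ℝ) × (Fin n → ℝ), g r.1 * h2 r.2
            ∂((Measure.map (fun ω (a : Fin k) => β a ω) P).prod
            (Measure.map (fun ω (p : Fin n) => ε p ω) P)) :=
      integral_prod_mul f (fun r : (Fin k → ℝ) × (Fin n → ℝ) => g r.1 * h2 r.2)
    have e3 : ∫ r : (Fin k → ℝ) × (Fin n → ℝ), g r.1 * h2 r.2
          ∂((Measure.map (fun ω (a : Fin k) => β a ω) P).prod
          (Measure.map (fun ω (p : Fin n) => ε p ω) P))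
        = (∫ B, g B ∂(Measure.map (fun ω (a : Fin k) => β a ω) P)) *
          ∫ E, h2 E ∂(Measure.map (fun ω (p : Fin n) => ε p ω) P) :=
      integral_prod_mul g h2
    rw [e1, hmut, e2, e3, integral_map hCm.aemeasurable hf.aestronglyMeasurable,
      integral_map hBm.aemeasurable hg.aestronglyMeasurable,
      integral_map hEm.aemeasurable hh.aestronglyMeasurable]
  -- moments of the building blocks
  have Iβ1 : ∀ a, Integrable (β a) P := by
    intro a
    have h0 : Integrable (fun x : ℝ => x) (Measure.map (β a) P) := by
      rw [hβgauss a]; exact gauss_integrable_id μv hτ2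
    exact (integrable_map_measure (f := β a) (g := fun x : ℝ => x)
      measurable_id.aestronglyMeasurable (hβ a).aemeasurable).mp h0
  have Eβ1 : ∀ a, ∫ ω, β a ω ∂P = μv := by
    intro a
    have h0 : ∫ x, x ∂(Measure.map (β a) P) = μv := by
      rw [hβgauss a]; exact gauss_integral_id μv hτ2
    rw [← h0, integral_map (φ := β a) (f := fun x : ℝ => x)
      (hβ a).aemeasurable measurable_id.aestronglyMeasurable]
  have Iβ2 : ∀ a, Integrable (fun ω => β a ω ^ 2) P := by
    intro a
    have h0 : Integrable (fun x : ℝ => x ^ 2) (Measure.map (β a) P) := by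
      rw [hβgauss a]; exact gauss_integrable_sq μv hτ2
    exact (integrable_map_measure (f := β a) (g := fun x : ℝ => x ^ 2)
      (measurable_id.pow_const 2).aestronglyMeasurable (hβ a).aemeasurable).mp h0
  have Eβ2 : ∀ a, ∫ ω, β a ω ^ 2 ∂P = μv ^ 2 + τ ^ 2 := by
    intro a
    have h0 : ∫ x, x ^ 2 ∂(Measure.map (β a) P) = μv ^ 2 + τ ^ 2 := by
      rw [hβgauss a, gauss_integral_sq μv hτ2, hcoeτ]
    rw [← h0, integral_map (φ := β a) (f := fun x : ℝ => x ^ 2)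
      (hβ a).aemeasurable (measurable_id.pow_const 2).aestronglyMeasurable]
  have Iε1 : ∀ p, Integrable (ε p) P := by
    intro p
    have h0 : Integrable (fun x : ℝ => x) (Measure.map (ε p) P) := by
      rw [hεgauss p]; exact gauss_integrable_id 0 hσ2
    exact (integrable_map_measure (f := ε p) (g := fun x : ℝ => x)
      measurable_id.aestronglyMeasurable (hε p).aemeasurable).mp h0
  have Eε1 : ∀ p, ∫ ω, ε p ω ∂P = 0 := by
    intro p
    have h0 : ∫ x, x ∂(Measure.map (ε p) P) = 0 := by
      rw [hεgauss p]; exact gauss_integral_id 0 hσ2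
    rw [← h0, integral_map (φ := ε p) (f := fun x : ℝ => x)
      (hε p).aemeasurable measurable_id.aestronglyMeasurable]
  have Iε2 : ∀ p, Integrable (fun ω => ε p ω ^ 2) P := by
    intro p
    have h0 : Integrable (fun x : ℝ => x ^ 2) (Measure.map (ε p) P) := by
      rw [hεgauss p]; exact gauss_integrable_sq 0 hσ2
    exact (integrable_map_measure (f := ε p) (g := fun x : ℝ => x ^ 2)
      (measurable_id.pow_const 2).aestronglyMeasurable (hε p).aemeasurable).mp h0
  have Eε2 : ∀ p, ∫ ω, ε p ω ^ 2 ∂P = σ ^ 2 := by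
    intro p
    have h0 : ∫ x, x ^ 2 ∂(Measure.map (ε p) P) = σ ^ 2 := by
      rw [hεgauss p, gauss_integral_sq 0 hσ2, hcoeσ]; ring
    rw [← h0, integral_map (φ := ε p) (f := fun x : ℝ => x ^ 2)
      (hε p).aemeasurable (measurable_id.pow_const 2).aestronglyMeasurable]
  -- products
  have Iββ : ∀ a b, Integrable (fun ω => β a ω * β b ω) P := by
    intro a b
    rcases eq_or_ne a b with rfl | hab
    · exact (Iβ2 a).congr (by filter_upwards with ω; rw [sq])
    · exact (hβindep.indepFun hab).integrable_mul (Iβ1 a) (Iβ1 b)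
  have Eββ : ∀ a b, ∫ ω, β a ω * β b ω ∂P = μv ^ 2 + (if a = b then τ ^ 2 else 0) := by
    intro a b
    rcases eq_or_ne a b with rfl | hab
    · rw [if_pos rfl]
      have h1 : ∫ ω, β a ω * β a ω ∂P = ∫ ω, β a ω ^ 2 ∂P :=
        integral_congr_ae (by filter_upwards with ω; rw [sq])
      rw [h1, Eβ2 a]
    · rw [if_neg hab]
      have h : ∫ ω, β a ω * β b ω ∂P = (∫ ω, β a ω ∂P) * ∫ ω, β b ω ∂P :=
        (hβindep.indepFun hab).integral_mul_eq_mul_integral (Iβ1 a).aestronglyMeasurable (Iβ1 b).aestronglyMeasurable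
      rw [h, Eβ1 a, Eβ1 b]; ring
  have hBE : IndepFun (fun ω (a : Fin k) => β a ω) (fun ω (p : Fin n) => ε p ω) P := by
    rw [indepFun_iff_map_prod_eq_prod_map_map hBm.aemeasurable hEm.aemeasurable]
    have h := congrArg (Measure.map (Prod.snd :
      (Fin n → Fin k) × (Fin k → ℝ) × (Fin n → ℝ) → (Fin k → ℝ) × (Fin n → ℝ))) hmut
    rw [Measure.map_map measurable_snd hTm, Measure.map_snd_prod, measure_univ, one_smul] at h
    exact h
  have Iβε : ∀ a p, Integrable (fun ω => β a ω * ε p ω) P := fun a p =>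
    ((hBE.comp (measurable_pi_apply a) (measurable_pi_apply p)).integrable_mul
      (Iβ1 a) (Iε1 p))
  have Eβε : ∀ a p, ∫ ω, β a ω * ε p ω ∂P = 0 := by
    intro a p
    have h : ∫ ω, β a ω * ε p ω ∂P = (∫ ω, β a ω ∂P) * ∫ ω, ε p ω ∂P :=
      (hBE.comp (measurable_pi_apply a)
        (measurable_pi_apply p)).integral_mul_eq_mul_integral (Iβ1 a).aestronglyMeasurable (Iε1 p).aestronglyMeasurable
    rw [h, Eε1 p, mul_zero]
  have Iεε : ∀ p q, Integrable (fun ω => ε p ω * ε q ω) P := by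
    intro p q
    rcases eq_or_ne p q with rfl | hpq
    · exact (Iε2 p).congr (by filter_upwards with ω; rw [sq])
    · exact (hεindep.indepFun hpq).integrable_mul (Iε1 p) (Iε1 q)
  have Eεε : ∀ p q, ∫ ω, ε p ω * ε q ω ∂P = if p = q then σ ^ 2 else 0 := by
    intro p q
    rcases eq_or_ne p q with rfl | hpq
    · rw [if_pos rfl]
      have h1 : ∫ ω, ε p ω * ε p ω ∂P = ∫ ω, ε p ω ^ 2 ∂P :=
        integral_congr_ae (by filter_upwards with ω; rw [sq])
      rw [h1, Eε2 p]
    · rw [if_neg hpq]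
      have h : ∫ ω, ε p ω * ε q ω ∂P = (∫ ω, ε p ω ∂P) * ∫ ω, ε q ω ∂P :=
        (hεindep.indepFun hpq).integral_mul_eq_mul_integral (Iε1 p).aestronglyMeasurable (Iε1 q).aestronglyMeasurable
      rw [h, Eε1 p, zero_mul]
  -- indicator helpers
  have hCind : ∀ (p : Fin n) (a : Fin k), Measurable fun ω => clInd p a (fun r => c r ω) :=
    fun p a => (clInd_meas p a).comp hCm
  have Iind : ∀ (p : Fin n) (a : Fin k),
      Integrable (fun ω => clInd p a (fun r => c r ω)) P := by
    intro p a
    have h := (integrable_const (1 : ℝ) (μ := P)).bdd_mul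
      (hCind p a).aestronglyMeasurable (Filter.Eventually.of_forall fun ω => clInd_abs_le _ _ _)
    exact h.congr (by filter_upwards with ω; rw [mul_one])
  have Iind2 : ∀ (p q : Fin n) (a b : Fin k),
      Integrable (fun ω => clInd p a (fun r => c r ω) * clInd q b (fun r => c r ω)) P :=
    fun p q a b => (Iind q b).bdd_mul (hCind p a).aestronglyMeasurable
      (Filter.Eventually.of_forall fun ω => clInd_abs_le _ _ _)
  -- the first moments
  have moment1 : ∀ p : Fin n, ∫ ω, y p ω ∂P = μv := by
    intro p
    have hexp : (fun ω => y p ω) = fun ω =>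
        (∑ a, clInd p a (fun r => c r ω) * β a ω) + ε p ω := by
      funext ω
      rw [hy p ω, ← sum_clInd_mul p (fun r => c r ω) (fun a => β a ω)]
    have hIsum : ∀ a : Fin k, Integrable (fun ω => clInd p a (fun r => c r ω) * β a ω) P :=
      fun a => (Iβ1 a).bdd_mul (hCind p a).aestronglyMeasurable
        (Filter.Eventually.of_forall fun ω => clInd_abs_le _ _ _)
    rw [hexp, integral_add (integrable_finset_sum _ (fun a _ => hIsum a)) (Iε1 p),
      integral_finset_sum _ (fun a _ => hIsum a), Eε1 p, add_zero]
    have hterm : ∀ a : Fin k, ∫ ω, clInd p a (fun r => c r ω) * β a ω ∂P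
        = (∫ ω, clInd p a (fun r => c r ω) ∂P) * μv := by
      intro a
      have hk := key (clInd p a) (fun B => B a) (fun _ => 1) (clInd_meas p a)
        (measurable_pi_apply a) measurable_const
      beta_reduce at hk
      simp only [mul_one, integral_const, probReal_univ, one_smul,
        smul_eq_mul] at hk
      rw [hk, Eβ1 a]
    rw [Finset.sum_congr rfl (fun a _ => hterm a), ← Finset.sum_mul]
    have hsum1 : (∑ a, ∫ ω, clInd p a (fun r => c r ω) ∂P) = 1 := by
      rw [← integral_finset_sum _ (fun a _ => Iind p a)]
      have h1 : ∫ ω, ∑ a, clInd p a (fun r => c r ω) ∂P = ∫ _ω, (1:ℝ) ∂P :=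
        integral_congr_ae (Filter.Eventually.of_forall (fun ω => sum_clInd p _))
      rw [h1, integral_const, probReal_univ, one_smul]
    rw [hsum1, one_mul]
  -- the second moments
  have moment2 : ∀ p q : Fin n, ∫ ω, y p ω * y q ω ∂P
      = μv ^ 2 + τ ^ 2 * (P {ω | c p ω = c q ω}).toReal + (if p = q then σ ^ 2 else 0) := by
    intro p q
    have hexp : ∀ ω, y p ω * y q ω =
        (∑ a, ∑ b, (clInd p a (fun r => c r ω) * clInd q b (fun r => c r ω)) *
          (β a ω * β b ω))
        + ((∑ a, clInd p a (fun r => c r ω) * (β a ω * ε q ω))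
        + ((∑ b, clInd q b (fun r => c r ω) * (β b ω * ε p ω))
        + ε p ω * ε q ω)) := by
      intro ω
      rw [hy p ω, hy q ω, ← sum_clInd_mul p (fun r => c r ω) (fun a => β a ω),
        ← sum_clInd_mul q (fun r => c r ω) (fun a => β a ω)]
      have e1 : (∑ a, clInd p a (fun r => c r ω) * β a ω) *
          (∑ b, clInd q b (fun r => c r ω) * β b ω)
          = ∑ a, ∑ b, (clInd p a (fun r => c r ω) * clInd q b (fun r => c r ω)) *
            (β a ω * β b ω) := by
        rw [Finset.sum_mul_sum]
        exact Finset.sum_congr rfl fun a _ => Finset.sum_congr rfl fun b _ => by ring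
      have e2 : (∑ a, clInd p a (fun r => c r ω) * β a ω) * ε q ω
          = ∑ a, clInd p a (fun r => c r ω) * (β a ω * ε q ω) := by
        rw [Finset.sum_mul]
        exact Finset.sum_congr rfl fun a _ => by ring
      have e3 : ε p ω * (∑ b, clInd q b (fun r => c r ω) * β b ω)
          = ∑ b, clInd q b (fun r => c r ω) * (β b ω * ε p ω) := by
        rw [Finset.mul_sum]
        exact Finset.sum_congr rfl fun b _ => by ring
      calc ((∑ a, clInd p a (fun r => c r ω) * β a ω) + ε p ω) *
            ((∑ b, clInd q b (fun r => c r ω) * β b ω) + ε q ω)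
          = (∑ a, clInd p a (fun r => c r ω) * β a ω) *
              (∑ b, clInd q b (fun r => c r ω) * β b ω)
            + ((∑ a, clInd p a (fun r => c r ω) * β a ω) * ε q ω
            + (ε p ω * (∑ b, clInd q b (fun r => c r ω) * β b ω)
            + ε p ω * ε q ω)) := by ring
        _ = _ := by rw [e1, e2, e3]
    have I1 : ∀ (a b : Fin k), Integrable (fun ω =>
        (clInd p a (fun r => c r ω) * clInd q b (fun r => c r ω)) * (β a ω * β b ω)) P :=
      fun a b => (Iββ a b).bdd_mul ((hCind p a).mul (hCind q b)).aestronglyMeasurable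
        (Filter.Eventually.of_forall fun ω => clInd_mul_abs_le _ _ _ _ _)
    have I2 : ∀ a : Fin k, Integrable (fun ω =>
        clInd p a (fun r => c r ω) * (β a ω * ε q ω)) P :=
      fun a => (Iβε a q).bdd_mul (hCind p a).aestronglyMeasurable
        (Filter.Eventually.of_forall fun ω => clInd_abs_le _ _ _)
    have I3 : ∀ b : Fin k, Integrable (fun ω =>
        clInd q b (fun r => c r ω) * (β b ω * ε p ω)) P :=
      fun b => (Iβε b p).bdd_mul (hCind q b).aestronglyMeasurable
        (Filter.Eventually.of_forall fun ω => clInd_abs_le _ _ _)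
    have hstep : ∫ ω, y p ω * y q ω ∂P
        = (∑ a, ∑ b, ∫ ω, (clInd p a (fun r => c r ω) * clInd q b (fun r => c r ω)) *
            (β a ω * β b ω) ∂P)
        + ((∑ a, ∫ ω, clInd p a (fun r => c r ω) * (β a ω * ε q ω) ∂P)
        + ((∑ b, ∫ ω, clInd q b (fun r => c r ω) * (β b ω * ε p ω) ∂P)
        + ∫ ω, ε p ω * ε q ω ∂P)) := by
      rw [integral_congr_ae (Filter.Eventually.of_forall hexp)]
      have IA : Integrable (fun ω => ∑ a, ∑ b,
          (clInd p a (fun r => c r ω) * clInd q b (fun r => c r ω)) * (β a ω * β b ω)) P :=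
        integrable_finset_sum _ (fun a _ => integrable_finset_sum _ (fun b _ => I1 a b))
      have IB : Integrable (fun ω => ∑ a, clInd p a (fun r => c r ω) * (β a ω * ε q ω)) P :=
        integrable_finset_sum _ (fun a _ => I2 a)
      have IC : Integrable (fun ω => ∑ b, clInd q b (fun r => c r ω) * (β b ω * ε p ω)) P :=
        integrable_finset_sum _ (fun b _ => I3 b)
      have ID : Integrable (fun ω => ε p ω * ε q ω) P := Iεε p q
      have ICD : Integrable (fun ω => (∑ b, clInd q b (fun r => c r ω) * (β b ω * ε p ω))
          + ε p ω * ε q ω) P := IC.add ID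
      have IBCD : Integrable (fun ω => (∑ a, clInd p a (fun r => c r ω) * (β a ω * ε q ω))
          + ((∑ b, clInd q b (fun r => c r ω) * (β b ω * ε p ω)) + ε p ω * ε q ω)) P :=
        IB.add ICD
      rw [integral_add IA IBCD, integral_add IB ICD, integral_add IC ID,
        integral_finset_sum _ (fun a _ => I2 a), integral_finset_sum _ (fun b _ => I3 b),
        integral_finset_sum _ (fun a _ => integrable_finset_sum _ (fun b _ => I1 a b))]
      congr 1
      exact Finset.sum_congr rfl fun a _ => integral_finset_sum _ (fun b _ => I1 a b)
    -- values of the individual integrals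
    have hJ : ∀ a b : Fin k, ∫ ω, (clInd p a (fun r => c r ω) * clInd q b (fun r => c r ω)) *
        (β a ω * β b ω) ∂P
        = (∫ ω, clInd p a (fun r => c r ω) * clInd q b (fun r => c r ω) ∂P) *
          (μv ^ 2 + if a = b then τ ^ 2 else 0) := by
      intro a b
      have hk := key (fun C => clInd p a C * clInd q b C) (fun B => B a * B b) (fun _ => 1)
        ((clInd_meas p a).mul (clInd_meas q b))
        ((measurable_pi_apply a).mul (measurable_pi_apply b)) measurable_const
      beta_reduce at hk
      simp only [mul_one, integral_const, probReal_univ, one_smul,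
        smul_eq_mul] at hk
      rw [hk, Eββ a b]
    have hK : ∀ a : Fin k, ∫ ω, clInd p a (fun r => c r ω) * (β a ω * ε q ω) ∂P = 0 := by
      intro a
      have hk := key (clInd p a) (fun B => B a) (fun E => E q) (clInd_meas p a)
        (measurable_pi_apply a) (measurable_pi_apply q)
      beta_reduce at hk
      rw [hk, Eε1 q, mul_zero, mul_zero]
    have hL : ∀ b : Fin k, ∫ ω, clInd q b (fun r => c r ω) * (β b ω * ε p ω) ∂P = 0 := by
      intro b
      have hk := key (clInd q b) (fun B => B b) (fun E => E p) (clInd_meas q b)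
        (measurable_pi_apply b) (measurable_pi_apply p)
      beta_reduce at hk
      rw [hk, Eε1 p, mul_zero, mul_zero]
    -- sum identities
    have hS2 : (∑ a : Fin k, ∑ b : Fin k,
        ∫ ω, clInd p a (fun r => c r ω) * clInd q b (fun r => c r ω) ∂P) = 1 := by
      have h1 : ∀ a : Fin k, (∑ b : Fin k,
          ∫ ω, clInd p a (fun r => c r ω) * clInd q b (fun r => c r ω) ∂P)
          = ∫ ω, ∑ b : Fin k, clInd p a (fun r => c r ω) * clInd q b (fun r => c r ω) ∂P :=
        fun a => (integral_finset_sum _ (fun b _ => Iind2 p q a b)).symm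
      rw [Finset.sum_congr rfl fun a _ => h1 a,
        ← integral_finset_sum _ (fun a _ => integrable_finset_sum _
          (fun b _ => Iind2 p q a b))]
      have h2 : ∀ ω, (∑ a : Fin k, ∑ b : Fin k,
          clInd p a (fun r => c r ω) * clInd q b (fun r => c r ω)) = 1 := by
        intro ω
        rw [← Finset.sum_mul_sum, sum_clInd, sum_clInd, one_mul]
      rw [integral_congr_ae (Filter.Eventually.of_forall h2), integral_const,
        probReal_univ, one_smul]
    have hmeaspq : MeasurableSet {ω | c p ω = c q ω} := by
      have h0 : {ω | c p ω = c q ω} = ⋃ a, ((c p) ⁻¹' {a} ∩ (c q) ⁻¹' {a}) := by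
        ext ω
        simp only [Set.mem_setOf_eq, Set.mem_iUnion, Set.mem_inter_iff, Set.mem_preimage,
          Set.mem_singleton_iff]
        constructor
        · intro h; exact ⟨c q ω, h, rfl⟩
        · rintro ⟨a, h1, h2⟩; exact h1.trans h2.symm
      rw [h0]
      exact MeasurableSet.iUnion fun a =>
        ((hc p) (measurableSet_singleton a)).inter ((hc q) (measurableSet_singleton a))
    have hS3 : (∑ a : Fin k, ∫ ω, clInd p a (fun r => c r ω) * clInd q a (fun r => c r ω) ∂P)
        = (P {ω | c p ω = c q ω}).toReal := by
      rw [← integral_finset_sum _ (fun a _ => Iind2 p q a a)]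
      have h2 : ∀ ω, (∑ a : Fin k, clInd p a (fun r => c r ω) * clInd q a (fun r => c r ω))
          = Set.indicator {ω' | c p ω' = c q ω'} (fun _ => (1:ℝ)) ω := by
        intro ω
        rw [sum_clInd_mul_clInd, Set.indicator_apply]
        simp only [Set.mem_setOf_eq]
      rw [integral_congr_ae (Filter.Eventually.of_forall h2)]
      have := integral_indicator_one (μ := P) hmeaspq
      exact this
    -- put everything together
    rw [hstep]
    rw [Finset.sum_congr rfl (fun a _ => Finset.sum_congr rfl (fun b _ => hJ a b))]
    rw [Finset.sum_congr (M := ℝ) rfl (fun a _ => hK a)]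
    rw [Finset.sum_congr (M := ℝ) rfl (fun b _ => hL b)]
    rw [Finset.sum_const_zero, Eεε p q, zero_add, zero_add]
    have hsplit : (∑ a : Fin k, ∑ b : Fin k,
        (∫ ω, clInd p a (fun r => c r ω) * clInd q b (fun r => c r ω) ∂P) *
          (μv ^ 2 + if a = b then τ ^ 2 else 0))
        = μv ^ 2 * (∑ a : Fin k, ∑ b : Fin k,
            ∫ ω, clInd p a (fun r => c r ω) * clInd q b (fun r => c r ω) ∂P)
          + τ ^ 2 * (∑ a : Fin k,
            ∫ ω, clInd p a (fun r => c r ω) * clInd q a (fun r => c r ω) ∂P) := by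
      have hb : ∀ a b : Fin k,
          (∫ ω, clInd p a (fun r => c r ω) * clInd q b (fun r => c r ω) ∂P) *
            (μv ^ 2 + if a = b then τ ^ 2 else 0)
          = μv ^ 2 * (∫ ω, clInd p a (fun r => c r ω) * clInd q b (fun r => c r ω) ∂P)
            + (if a = b then
                τ ^ 2 * ∫ ω, clInd p a (fun r => c r ω) * clInd q b (fun r => c r ω) ∂P
              else 0) := by
        intro a b
        split <;> ring
      calc (∑ a : Fin k, ∑ b : Fin k,
          (∫ ω, clInd p a (fun r => c r ω) * clInd q b (fun r => c r ω) ∂P) *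
            (μv ^ 2 + if a = b then τ ^ 2 else 0))
          = ∑ a : Fin k, ∑ b : Fin k,
            (μv ^ 2 * (∫ ω, clInd p a (fun r => c r ω) * clInd q b (fun r => c r ω) ∂P)
            + (if a = b then
                τ ^ 2 * ∫ ω, clInd p a (fun r => c r ω) * clInd q b (fun r => c r ω) ∂P
              else 0)) :=
          Finset.sum_congr rfl fun a _ => Finset.sum_congr rfl fun b _ => hb a b
        _ = ∑ a : Fin k, ((∑ b : Fin k,
              μv ^ 2 * ∫ ω, clInd p a (fun r => c r ω) * clInd q b (fun r => c r ω) ∂P)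
            + ∑ b : Fin k, (if a = b then
                τ ^ 2 * ∫ ω, clInd p a (fun r => c r ω) * clInd q b (fun r => c r ω) ∂P
              else 0)) :=
          Finset.sum_congr rfl fun a _ => Finset.sum_add_distrib
        _ = (∑ a : Fin k, ∑ b : Fin k,
              μv ^ 2 * ∫ ω, clInd p a (fun r => c r ω) * clInd q b (fun r => c r ω) ∂P)
            + ∑ a : Fin k, ∑ b : Fin k, (if a = b then
                τ ^ 2 * ∫ ω, clInd p a (fun r => c r ω) * clInd q b (fun r => c r ω) ∂P
              else 0) := Finset.sum_add_distrib
        _ = μv ^ 2 * (∑ a : Fin k, ∑ b : Fin k,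
              ∫ ω, clInd p a (fun r => c r ω) * clInd q b (fun r => c r ω) ∂P)
            + τ ^ 2 * (∑ a : Fin k,
              ∫ ω, clInd p a (fun r => c r ω) * clInd q a (fun r => c r ω) ∂P) := by
          congr 1
          · rw [Finset.mul_sum]
            refine Finset.sum_congr rfl fun a _ => ?_
            rw [Finset.mul_sum]
          · rw [Finset.mul_sum]
            refine Finset.sum_congr rfl fun a _ => ?_
            rw [Finset.sum_ite_eq]
            simp
    rw [hsplit, hS2, hS3, mul_one]
  -- wrap up
  have hPii : ∀ p : Fin n, (P {ω | c p ω = c p ω}).toReal = 1 := by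
    intro p
    simp [Set.setOf_true]
  have hvari : var P (y i) = τ ^ 2 + σ ^ 2 := by
    unfold var cov
    rw [moment2 i i, moment1 i, hPii i, if_pos rfl]
    ring
  have hvarj : var P (y j) = τ ^ 2 + σ ^ 2 := by
    unfold var cov
    rw [moment2 j j, moment1 j, hPii j, if_pos rfl]
    ring
  have hcov : cov P (y i) (y j) = τ ^ 2 * (P {ω | c i ω = c j ω}).toReal := by
    unfold cov
    rw [moment2 i j, moment1 i, moment1 j, if_neg hij]
    ring
  unfold corr
  rw [hcov, hvari, hvarj, Real.mul_self_sqrt (by positivity)]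
  ring
end

section
/- Under the Gaussian regression model with global regression coefficients and cluster-specific Gaussian spatial random effects, for any two indices i ≠ j the marginal covariance of the responses is Cov(y_i, y_j) = x_iᵀ T x_j + Σ_{h=1}^{k} λ_h² (H_h)_{ij} · P(c_i = c_j = h). -/
open MeasureTheory ProbabilityTheory

open scoped NNReal ENNReal
open Real

lemma aux_integral_sq_exp {b : ℝ} (hb : 0 < b) :
    ∫ x : ℝ, x ^ 2 * Real.exp (-b * x ^ 2) = Real.sqrt (π / b) / (2 * b) := by
  have hint2 : Integrable (fun x : ℝ => x ^ 2 * Real.exp (-b * x ^ 2)) := by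
    have h := integrable_rpow_mul_exp_neg_mul_sq hb (s := 2) (by norm_num)
    refine h.congr (Filter.Eventually.of_forall fun x => ?_)
    simp only [Real.rpow_two]
  have hf : Integrable (fun x : ℝ => x * Real.exp (-b * x ^ 2)) :=
    integrable_mul_exp_neg_mul_sq hb
  set f' : ℝ → ℝ := fun x => Real.exp (-b * x ^ 2) - 2 * b * (x ^ 2 * Real.exp (-b * x ^ 2))
    with hf'def
  have hderiv : ∀ x : ℝ, HasDerivAt (fun x : ℝ => x * Real.exp (-b * x ^ 2)) (f' x) x := by
    intro x
    have h1 : HasDerivAt (fun x : ℝ => -b * x ^ 2) (-b * (2 * x)) x := by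
      simpa using ((hasDerivAt_pow 2 x).const_mul (-b))
    have h2 := h1.exp
    have h3 : HasDerivAt (fun y : ℝ => y * Real.exp (-b * y ^ 2))
        (1 * Real.exp (-b * x ^ 2) + id x * (Real.exp (-b * x ^ 2) * (-b * (2 * x)))) x :=
      (hasDerivAt_id x).mul h2
    convert h3 using 1
    simp [hf'def]
    ring
  have hf'int : Integrable f' :=
    (integrable_exp_neg_mul_sq hb).sub (hint2.const_mul (2 * b))
  have h0 : ∫ x, f' x = 0 :=
    integral_eq_zero_of_hasDerivAt_of_integrable hderiv hf'int hf
  rw [hf'def] at h0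
  rw [integral_sub (integrable_exp_neg_mul_sq hb) (hint2.const_mul (2 * b)),
    integral_const_mul, integral_gaussian] at h0
  have h2b : (2 * b) ≠ 0 := by positivity
  field_simp at h0 ⊢
  linarith

lemma aux_gaussian_integral_eq (m : ℝ) {v : ℝ≥0} (hv : v ≠ 0) (g : ℝ → ℝ) :
    ∫ x, g x ∂(gaussianReal m v) = ∫ x, gaussianPDFReal m v x * g x := by
  rw [gaussianReal_of_var_ne_zero _ hv]
  have hd : gaussianPDF m v = fun x => ((gaussianPDFReal m v x).toNNReal : ℝ≥0∞) := by
    ext x; rfl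
  rw [hd, integral_withDensity_eq_integral_smul
    ((measurable_gaussianPDFReal m v).real_toNNReal) g]
  congr 1
  funext x
  simp [NNReal.smul_def, Real.coe_toNNReal _ (gaussianPDFReal_nonneg m v x)]

lemma aux_gaussian_integrable_iff (m : ℝ) {v : ℝ≥0} (hv : v ≠ 0) (g : ℝ → ℝ) :
    Integrable g (gaussianReal m v) ↔
      Integrable (fun x => gaussianPDFReal m v x * g x) volume := by
  rw [gaussianReal_of_var_ne_zero _ hv]
  have hd : gaussianPDF m v = fun x => ((gaussianPDFReal m v x).toNNReal : ℝ≥0∞) := by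
    ext x; rfl
  rw [hd, integrable_withDensity_iff_integrable_smul
    ((measurable_gaussianPDFReal m v).real_toNNReal)]
  constructor <;> intro h <;> refine h.congr (Filter.Eventually.of_forall fun x => ?_) <;>
    simp [NNReal.smul_def, Real.coe_toNNReal _ (gaussianPDFReal_nonneg m v x)]

lemma aux_centered {v : ℝ≥0} (hv : v ≠ 0) :
    Integrable (fun x : ℝ => x) (gaussianReal 0 v) ∧
    (∫ x, x ∂(gaussianReal 0 v)) = 0 ∧
    Integrable (fun x : ℝ => x ^ 2) (gaussianReal 0 v) ∧
    (∫ x, x ^ 2 ∂(gaussianReal 0 v)) = (v : ℝ) := by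
  have hv' : (0 : ℝ) < (v : ℝ) := by
    exact_mod_cast pos_iff_ne_zero.mpr hv
  set C : ℝ := (Real.sqrt (2 * π * v))⁻¹ with hC
  set b : ℝ := (2 * (v : ℝ))⁻¹ with hbdef
  have hb : 0 < b := by positivity
  have hpdf : ∀ x : ℝ, gaussianPDFReal 0 v x = C * Real.exp (-b * x ^ 2) := by
    intro x
    rw [gaussianPDFReal, hC]
    congr 1
    rw [sub_zero, neg_div, div_eq_inv_mul, ← neg_mul, hbdef]
  have hint1 : Integrable (fun x : ℝ => x) (gaussianReal 0 v) := by
    rw [aux_gaussian_integrable_iff 0 hv]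
    have := (integrable_mul_exp_neg_mul_sq hb).const_mul C
    refine this.congr (Filter.Eventually.of_forall fun x => ?_)
    simp only [hpdf x]; ring
  have hint2 : Integrable (fun x : ℝ => x ^ 2) (gaussianReal 0 v) := by
    rw [aux_gaussian_integrable_iff 0 hv]
    have hbase : Integrable (fun x : ℝ => x ^ 2 * Real.exp (-b * x ^ 2)) := by
      have h := integrable_rpow_mul_exp_neg_mul_sq hb (s := 2) (by norm_num)
      refine h.congr (Filter.Eventually.of_forall fun x => ?_)
      simp only [Real.rpow_two]
    refine (hbase.const_mul C).congr (Filter.Eventually.of_forall fun x => ?_)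
    simp only [hpdf x]; ring
  refine ⟨hint1, ?_, hint2, ?_⟩
  · rw [aux_gaussian_integral_eq 0 hv]
    set h : ℝ → ℝ := fun x => gaussianPDFReal 0 v x * x with hh
    have hodd : ∀ x, h (-x) = -h x := by
      intro x
      simp only [hh, hpdf, neg_sq, mul_neg]
    have : (∫ x, h x) = -∫ x, h x := by
      conv_lhs => rw [← integral_neg_eq_self h volume]
      simp_rw [hodd]
      exact integral_neg h
    linarith
  · rw [aux_gaussian_integral_eq 0 hv]
    have : (fun x : ℝ => gaussianPDFReal 0 v x * x ^ 2)
        = fun x => C * (x ^ 2 * Real.exp (-b * x ^ 2)) := by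
      funext x; rw [hpdf x]; ring
    rw [this, integral_const_mul, aux_integral_sq_exp hb]
    have h1 : π / b = 2 * π * v := by
      rw [hbdef]; field_simp
    have h2 : 2 * b = (v : ℝ)⁻¹ := by
      rw [hbdef]; field_simp
    rw [h1, h2, hC]
    have hs : (0 : ℝ) < Real.sqrt (2 * π * v) := Real.sqrt_pos.mpr (by positivity)
    field_simp

lemma aux_integrable_dirac {f : ℝ → ℝ} (a : ℝ) : Integrable f (Measure.dirac a) := by
  have h : f =ᵐ[Measure.dirac a] (fun _ => f a) := by
    rw [MeasureTheory.ae_dirac_eq]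
    exact Filter.eventually_pure.2 rfl
  exact (integrable_const (f a)).congr h.symm

lemma aux_gaussian_moments (m : ℝ) (v : ℝ≥0) :
    Integrable (fun x : ℝ => x) (gaussianReal m v) ∧
    (∫ x, x ∂(gaussianReal m v)) = m ∧
    Integrable (fun x : ℝ => x ^ 2) (gaussianReal m v) ∧
    (∫ x, x ^ 2 ∂(gaussianReal m v)) = (v : ℝ) + m ^ 2 := by
  by_cases hv : v = 0
  · subst hv
    rw [gaussianReal_zero_var]
    refine ⟨aux_integrable_dirac m, ?_, aux_integrable_dirac m, ?_⟩ <;>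
      simp [integral_dirac]
  · obtain ⟨h1, h2, h3, h4⟩ := aux_centered hv
    have hmap : Measure.map (· + m) (gaussianReal 0 v) = gaussianReal m v := by
      simpa using gaussianReal_map_add_const (μ := 0) (v := v) m
    have hmeas : Measurable (fun x : ℝ => x + m) := measurable_id.add_const m
    have hint1 : Integrable (fun x : ℝ => x) (gaussianReal m v) := by
      rw [← hmap, integrable_map_measure measurable_id'.aestronglyMeasurable hmeas.aemeasurable]
      exact (h1.add (integrable_const m)).congr (Filter.Eventually.of_forall fun x => rfl)
    have hint2 : Integrable (fun x : ℝ => x ^ 2) (gaussianReal m v) := by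
      rw [← hmap, integrable_map_measure
        (measurable_id'.pow_const 2).aestronglyMeasurable hmeas.aemeasurable]
      have : Integrable (fun x : ℝ => x ^ 2 + 2 * m * x + m ^ 2) (gaussianReal 0 v) :=
        (h3.add (h1.const_mul (2 * m))).add (integrable_const (m ^ 2))
      exact this.congr (Filter.Eventually.of_forall fun x => by simp [Function.comp]; ring)
    refine ⟨hint1, ?_, hint2, ?_⟩
    · rw [← hmap, integral_map hmeas.aemeasurable measurable_id'.aestronglyMeasurable]
      rw [integral_add h1 (integrable_const m), h2, integral_const]
      simp
    · rw [← hmap, integral_map hmeas.aemeasurable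
        (measurable_id'.pow_const 2).aestronglyMeasurable]
      have heq : (fun x : ℝ => (x + m) ^ 2)
          = fun x : ℝ => x ^ 2 + 2 * m * x + m ^ 2 := by
        funext x; ring
      rw [heq]
      have ha : Integrable (fun x : ℝ => 2 * m * x) (gaussianReal 0 v) := by
        exact h1.const_mul (2 * m)
      have hb : Integrable (fun x : ℝ => x ^ 2 + 2 * m * x) (gaussianReal 0 v) := by
        exact h3.add ha
      rw [integral_add hb (integrable_const (m ^ 2)),
        integral_add h3 ha, h4, integral_const_mul, h2, integral_const]
      simp

lemma aux_rv_moments {Ω : Type*} [MeasurableSpace Ω] (P : Measure Ω) [IsProbabilityMeasure P]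
    {X : Ω → ℝ} (hXm : Measurable X) {m : ℝ} {v : ℝ≥0}
    (hX : Measure.map X P = gaussianReal m v) :
    MemLp X 2 P ∧ (∫ ω, X ω ∂P) = m ∧ (∫ ω, (X ω) ^ 2 ∂P) = (v : ℝ) + m ^ 2 := by
  obtain ⟨h1, h2, h3, h4⟩ := aux_gaussian_moments m v
  have hL2 : MemLp X 2 P := by
    have hid : MemLp (id : ℝ → ℝ) 2 (gaussianReal m v) := by
      rw [memLp_two_iff_integrable_sq aestronglyMeasurable_id]
      exact h3.congr (Filter.Eventually.of_forall fun x => rfl)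
    have := (memLp_map_measure_iff aestronglyMeasurable_id hXm.aemeasurable).mp
      (by rw [hX]; exact hid)
    exact this
  refine ⟨hL2, ?_, ?_⟩
  · have := integral_map hXm.aemeasurable (aestronglyMeasurable_id (μ := Measure.map X P))
    rw [hX] at this
    simpa [id] using this.symm.trans h2
  · have := integral_map hXm.aemeasurable
      ((measurable_id.pow_const 2).aestronglyMeasurable (μ := Measure.map X P))
    rw [hX] at this
    simpa [id] using this.symm.trans h4

lemma aux_integrable_mul {Ω : Type*} [MeasurableSpace Ω] {P : Measure Ω}
    [IsProbabilityMeasure P]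
    {f g : Ω → ℝ} (hf : MemLp f 2 P) (hg : MemLp g 2 P) :
    Integrable (fun ω => f ω * g ω) P := by
  have h := (((hf.add hg).integrable_sq).sub hf.integrable_sq).sub hg.integrable_sq
  refine (h.const_mul (1/2)).congr (Filter.Eventually.of_forall fun ω => ?_)
  simp only [Pi.sub_apply, Pi.add_apply]
  ring


/-- Under the Gaussian regression model with global regression coefficients and
cluster-specific Gaussian spatial random effects, for any two indices `i ≠ j`,
`Cov(y i, y j) = xᵢᵀ T xⱼ + ∑ₕ λₕ² (Hₕ)ᵢⱼ · P(cᵢ = cⱼ = h)`. -/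
theorem covariance_global_regression_local_spatial
    {Ω : Type*} [MeasurableSpace Ω] (P : Measure Ω) [IsProbabilityMeasure P]
    (n k p : ℕ) (hn : 2 ≤ n) (hk : 1 ≤ k) (hp : 1 ≤ p)
    -- random cluster labels
    (c : Fin n → Ω → Fin k) (hc : ∀ i, Measurable (c i))
    -- global Gaussian coefficient vector β ~ N(μv, T)
    (β : Ω → (Fin p → ℝ)) (hβ : Measurable β)
    -- Gaussian errors
    (ε : Fin n → Ω → ℝ) (hε : ∀ i, Measurable (ε i))
    -- cluster-specific spatial random effects
    (θ : Fin n → Ω → ℝ) (hθ : ∀ i, Measurable (θ i))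
    (μv : Fin p → ℝ) (T : Matrix (Fin p) (Fin p) ℝ) (hT : T.PosSemidef)
    (σ : ℝ) (hσ : 0 < σ)
    (lam : Fin k → ℝ) (hlam : ∀ h, 0 < lam h)
    (H : Fin k → Matrix (Fin n) (Fin n) ℝ) (hH : ∀ h, (H h).PosSemidef)
    (hHdiag : ∀ h i, H h i i = 1)
    -- β is Gaussian with mean μv and covariance T
    (hβgauss : ∀ a : Fin p → ℝ,
      Measure.map (fun ω => ∑ l, a l * β ω l) P
        = gaussianReal (∑ l, a l * μv l)
            (Real.toNNReal (∑ l, ∑ m, a l * T l m * a m)))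
    -- the ε's are i.i.d. N(0, σ²)
    (hεindep : iIndepFun ε P)
    (hεgauss : ∀ i, Measure.map (ε i) P = gaussianReal 0 (Real.toNNReal (σ ^ 2)))
    -- the θ's are square integrable with the prescribed conditional moments given the labels
    (hθL2 : ∀ i, MemLp (θ i) 2 P)
    (hθcond1 : ∀ i, P[θ i |
      MeasurableSpace.comap (fun ω (i' : Fin n) => c i' ω) inferInstance] =ᵐ[P] 0)
    (hθcond2 : ∀ i j, P[fun ω => θ i ω * θ j ω |
      MeasurableSpace.comap (fun ω (i' : Fin n) => c i' ω) inferInstance]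
      =ᵐ[P] fun ω => ∑ h, (lam h) ^ 2 * H h i j * (if c i ω = h ∧ c j ω = h then (1 : ℝ) else 0))
    -- β is independent of (labels, θ)
    (hβind : IndepFun β (fun ω => ((fun i => c i ω, fun i => θ i ω) :
      (Fin n → Fin k) × (Fin n → ℝ))) P)
    -- the ε family is independent of (labels, θ, β)
    (hεind : IndepFun (fun ω (i : Fin n) => ε i ω)
      (fun ω => ((fun i => c i ω, fun i => θ i ω, β ω) :
        (Fin n → Fin k) × (Fin n → ℝ) × (Fin p → ℝ))) P)
    -- fixed covariates and responses
    (x : Fin n → Fin p → ℝ)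
    (y : Fin n → Ω → ℝ)
    (hy : ∀ i ω, y i ω = (∑ l, x i l * β ω l) + θ i ω + ε i ω)
    (i j : Fin n) (hij : i ≠ j) :
    cov P (y i) (y j)
      = (∑ l, ∑ m, x i l * T l m * x j m)
        + ∑ h, (lam h) ^ 2 * H h i j * (P {ω | c i ω = h ∧ c j ω = h}).toReal := by
  classical
  have hβl : ∀ l, Measurable fun ω => β ω l := fun l => (measurable_pi_apply l).comp hβ
  -- nonnegativity of quadratic forms of T
  have hTnn : ∀ a : Fin p → ℝ, 0 ≤ ∑ l, ∑ m, a l * T l m * a m := by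
    intro a
    have h := hT.dotProduct_mulVec_nonneg a
    have heq : dotProduct (star a) (T.mulVec a) = ∑ l, ∑ m, a l * T l m * a m := by
      simp only [dotProduct, Matrix.mulVec, Pi.star_apply, star_trivial,
        Finset.mul_sum, mul_assoc]
    rwa [heq] at h
  -- moments of linear functionals of β
  have hfa : ∀ a : Fin p → ℝ,
      MemLp (fun ω => ∑ l, a l * β ω l) 2 P ∧
      ((∫ ω, ∑ l, a l * β ω l ∂P) = ∑ l, a l * μv l) ∧
      ((∫ ω, (∑ l, a l * β ω l) ^ 2 ∂P)
        = (∑ l, ∑ m, a l * T l m * a m) + (∑ l, a l * μv l) ^ 2) := by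
    intro a
    have hma : Measurable fun ω => ∑ l, a l * β ω l :=
      Finset.measurable_sum _ fun l _ => (hβl l).const_mul (a l)
    obtain ⟨h1, h2, h3⟩ := aux_rv_moments P hma (hβgauss a)
    refine ⟨h1, h2, ?_⟩
    rw [h3, Real.coe_toNNReal _ (hTnn a)]
  have hfL2 : ∀ i', MemLp (fun ω => ∑ l, x i' l * β ω l) 2 P := fun i' => (hfa (x i')).1
  have hEf : ∀ i', (∫ ω, ∑ l, x i' l * β ω l ∂P) = ∑ l, x i' l * μv l :=
    fun i' => (hfa (x i')).2.1
  -- moments of ε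
  have hεL2 : ∀ i', MemLp (ε i') 2 P := fun i' => (aux_rv_moments P (hε i') (hεgauss i')).1
  have hEε : ∀ i', (∫ ω, ε i' ω ∂P) = 0 := fun i' => (aux_rv_moments P (hε i') (hεgauss i')).2.1
  -- the label σ-algebra
  have hcm : Measurable (fun ω (i' : Fin n) => c i' ω) :=
    measurable_pi_lambda _ fun i' => hc i'
  have hm' : MeasurableSpace.comap (fun ω (i' : Fin n) => c i' ω) inferInstance
      ≤ ‹MeasurableSpace Ω› := hcm.comap_le
  -- mean of θ
  have hEθ : ∀ i', (∫ ω, θ i' ω ∂P) = 0 := by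
    intro i'
    rw [← integral_condExp hm' (f := θ i'), integral_congr_ae (hθcond1 i')]
    simp
  -- second moment of θ i * θ j
  have hSm : ∀ h : Fin k, MeasurableSet {ω | c i ω = h ∧ c j ω = h} := fun h =>
    (hc i (measurableSet_singleton h)).inter (hc j (measurableSet_singleton h))
  have hiteeq : ∀ h : Fin k, (fun ω => (if c i ω = h ∧ c j ω = h then (1:ℝ) else 0))
      = Set.indicator {ω | c i ω = h ∧ c j ω = h} (fun _ => (1:ℝ)) := by
    intro h
    funext ω
    rw [Set.indicator_apply]
    by_cases hh : c i ω = h ∧ c j ω = h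
    · simp [hh, Set.mem_setOf_eq]
    · simp [hh, Set.mem_setOf_eq]
  have hEθθ : (∫ ω, θ i ω * θ j ω ∂P)
      = ∑ h, lam h ^ 2 * H h i j * (P {ω | c i ω = h ∧ c j ω = h}).toReal := by
    rw [← integral_condExp hm' (f := fun ω => θ i ω * θ j ω),
      integral_congr_ae (hθcond2 i j)]
    rw [integral_finset_sum]
    · refine Finset.sum_congr rfl fun h _ => ?_
      rw [integral_const_mul, hiteeq h, integral_indicator_const (1:ℝ) (hSm h)]
      simp [measureReal_def]
    · intro h _
      refine Integrable.const_mul ?_ _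
      rw [hiteeq h]
      exact (integrable_const (1:ℝ)).indicator (hSm h)
  -- independences
  have hind_fθ : ∀ a b : Fin n, IndepFun (fun ω => ∑ l, x a l * β ω l) (θ b) P := by
    intro a b
    have hφ : Measurable fun q : Fin p → ℝ => ∑ l, x a l * q l :=
      Finset.measurable_sum _ fun l _ => by fun_prop
    have hψ : Measurable fun q : (Fin n → Fin k) × (Fin n → ℝ) => q.2 b :=
      (measurable_pi_apply b).comp measurable_snd
    exact hβind.comp hφ hψ
  have hind_εθ : ∀ a b : Fin n, IndepFun (ε a) (θ b) P := by
    intro a b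
    have hφ : Measurable fun q : Fin n → ℝ => q a := measurable_pi_apply a
    have hψ : Measurable fun q : (Fin n → Fin k) × (Fin n → ℝ) × (Fin p → ℝ) => q.2.1 b :=
      (measurable_pi_apply b).comp (measurable_fst.comp measurable_snd)
    exact hεind.comp hφ hψ
  have hind_εf : ∀ a b : Fin n, IndepFun (ε a) (fun ω => ∑ l, x b l * β ω l) P := by
    intro a b
    have hφ : Measurable fun q : Fin n → ℝ => q a := measurable_pi_apply a
    have hψ : Measurable fun q : (Fin n → Fin k) × (Fin n → ℝ) × (Fin p → ℝ) =>
        ∑ l, x b l * q.2.2 l :=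
      Finset.measurable_sum _ fun l _ => by fun_prop
    exact hεind.comp hφ hψ
  have hind_εε : IndepFun (ε i) (ε j) P := hεindep.indepFun hij
  -- measurability shorthands
  have hfm : ∀ i', Measurable (fun ω => ∑ l, x i' l * β ω l) :=
    fun i' => Finset.measurable_sum _ fun l _ => (hβl l).const_mul (x i' l)
  -- integrability of summands
  have hfint : ∀ i', Integrable (fun ω => ∑ l, x i' l * β ω l) P :=
    fun i' => (hfL2 i').integrable one_le_two
  have hθint : ∀ i', Integrable (θ i') P := fun i' => (hθL2 i').integrable one_le_two
  have hεint : ∀ i', Integrable (ε i') P := fun i' => (hεL2 i').integrable one_le_two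
  -- mean of y
  have hEy : ∀ i', (∫ ω, y i' ω ∂P) = ∑ l, x i' l * μv l := by
    intro i'
    simp only [hy]
    have h1 : Integrable (fun ω => (∑ l, x i' l * β ω l) + θ i' ω) P :=
      (hfint i').add (hθint i')
    rw [integral_add h1 (hεint i'), integral_add (hfint i') (hθint i'),
      hEf i', hEθ i', hEε i']
    ring
  -- second moment of f i * f j via polarization
  have hsum_eq : (fun ω => (∑ l, x i l * β ω l) + (∑ l, x j l * β ω l))
      = fun ω => ∑ l, (x i l + x j l) * β ω l := by
    funext ω
    rw [← Finset.sum_add_distrib]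
    exact Finset.sum_congr rfl fun l _ => by ring
  have hEff : (∫ ω, (∑ l, x i l * β ω l) * (∑ l, x j l * β ω l) ∂P)
      = (∫ ω, ((∑ l, (x i l + x j l) * β ω l)) ^ 2 ∂P) / 2
        - (∫ ω, (∑ l, x i l * β ω l) ^ 2 ∂P) / 2
        - (∫ ω, (∑ l, x j l * β ω l) ^ 2 ∂P) / 2 := by
    have hbody : (fun ω => (∑ l, x i l * β ω l) * (∑ l, x j l * β ω l))
        = fun ω => (1/2) * (((∑ l, (x i l + x j l) * β ω l)) ^ 2
            - (∑ l, x i l * β ω l) ^ 2 - (∑ l, x j l * β ω l) ^ 2) := by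
      funext ω
      have := congrFun hsum_eq ω
      rw [← this]
      ring
    have hsq : ∀ a : Fin p → ℝ, Integrable (fun ω => (∑ l, a l * β ω l) ^ 2) P :=
      fun a => ((hfa a).1).integrable_sq
    have hsub1 : Integrable (fun ω => (∑ l, (x i l + x j l) * β ω l) ^ 2
        - (∑ l, x i l * β ω l) ^ 2) P := (hsq _).sub (hsq _)
    rw [hbody, integral_const_mul,
      integral_sub hsub1 (hsq (x j)),
      integral_sub (hsq (fun l => x i l + x j l)) (hsq (x i))]
    ring
  -- the nine-term expansion of the product
  have hprod : (fun ω => y i ω * y j ω)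
      = fun ω =>
        (∑ l, x i l * β ω l) * (∑ l, x j l * β ω l)
        + (∑ l, x i l * β ω l) * θ j ω
        + (∑ l, x i l * β ω l) * ε j ω
        + θ i ω * (∑ l, x j l * β ω l)
        + θ i ω * θ j ω
        + θ i ω * ε j ω
        + ε i ω * (∑ l, x j l * β ω l)
        + ε i ω * θ j ω
        + ε i ω * ε j ω := by
    funext ω
    rw [hy i ω, hy j ω]
    ring
  -- integrability of the nine products
  have e1 : Integrable (fun ω => (∑ l, x i l * β ω l) * (∑ l, x j l * β ω l)) P :=
    aux_integrable_mul (hfL2 i) (hfL2 j)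
  have e2 : Integrable (fun ω => (∑ l, x i l * β ω l) * θ j ω) P :=
    aux_integrable_mul (hfL2 i) (hθL2 j)
  have e3 : Integrable (fun ω => (∑ l, x i l * β ω l) * ε j ω) P :=
    aux_integrable_mul (hfL2 i) (hεL2 j)
  have e4 : Integrable (fun ω => θ i ω * (∑ l, x j l * β ω l)) P :=
    aux_integrable_mul (hθL2 i) (hfL2 j)
  have e5 : Integrable (fun ω => θ i ω * θ j ω) P :=
    aux_integrable_mul (hθL2 i) (hθL2 j)
  have e6 : Integrable (fun ω => θ i ω * ε j ω) P :=
    aux_integrable_mul (hθL2 i) (hεL2 j)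
  have e7 : Integrable (fun ω => ε i ω * (∑ l, x j l * β ω l)) P :=
    aux_integrable_mul (hεL2 i) (hfL2 j)
  have e8 : Integrable (fun ω => ε i ω * θ j ω) P :=
    aux_integrable_mul (hεL2 i) (hθL2 j)
  have e9 : Integrable (fun ω => ε i ω * ε j ω) P :=
    aux_integrable_mul (hεL2 i) (hεL2 j)
  have E2 : Integrable (fun ω => (∑ l, x i l * β ω l) * (∑ l, x j l * β ω l)
      + (∑ l, x i l * β ω l) * θ j ω) P := e1.add e2
  have E3 : Integrable (fun ω => (∑ l, x i l * β ω l) * (∑ l, x j l * β ω l)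
      + (∑ l, x i l * β ω l) * θ j ω + (∑ l, x i l * β ω l) * ε j ω) P := E2.add e3
  have E4 : Integrable (fun ω => (∑ l, x i l * β ω l) * (∑ l, x j l * β ω l)
      + (∑ l, x i l * β ω l) * θ j ω + (∑ l, x i l * β ω l) * ε j ω
      + θ i ω * (∑ l, x j l * β ω l)) P := E3.add e4
  have E5 : Integrable (fun ω => (∑ l, x i l * β ω l) * (∑ l, x j l * β ω l)
      + (∑ l, x i l * β ω l) * θ j ω + (∑ l, x i l * β ω l) * ε j ω
      + θ i ω * (∑ l, x j l * β ω l) + θ i ω * θ j ω) P := E4.add e5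
  have E6 : Integrable (fun ω => (∑ l, x i l * β ω l) * (∑ l, x j l * β ω l)
      + (∑ l, x i l * β ω l) * θ j ω + (∑ l, x i l * β ω l) * ε j ω
      + θ i ω * (∑ l, x j l * β ω l) + θ i ω * θ j ω + θ i ω * ε j ω) P := E5.add e6
  have E7 : Integrable (fun ω => (∑ l, x i l * β ω l) * (∑ l, x j l * β ω l)
      + (∑ l, x i l * β ω l) * θ j ω + (∑ l, x i l * β ω l) * ε j ω
      + θ i ω * (∑ l, x j l * β ω l) + θ i ω * θ j ω + θ i ω * ε j ω
      + ε i ω * (∑ l, x j l * β ω l)) P := E6.add e7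
  have E8 : Integrable (fun ω => (∑ l, x i l * β ω l) * (∑ l, x j l * β ω l)
      + (∑ l, x i l * β ω l) * θ j ω + (∑ l, x i l * β ω l) * ε j ω
      + θ i ω * (∑ l, x j l * β ω l) + θ i ω * θ j ω + θ i ω * ε j ω
      + ε i ω * (∑ l, x j l * β ω l) + ε i ω * θ j ω) P := E7.add e8
  -- values of the independent cross terms
  have v2 : (∫ ω, (∑ l, x i l * β ω l) * θ j ω ∂P) = 0 := by
    rw [(hind_fθ i j).integral_fun_mul_eq_mul_integral (hfm i).aestronglyMeasurable (hθ j).aestronglyMeasurable,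
      hEθ j]
    ring
  have v3 : (∫ ω, (∑ l, x i l * β ω l) * ε j ω ∂P) = 0 := by
    rw [(hind_εf j i).symm.integral_fun_mul_eq_mul_integral (hfm i).aestronglyMeasurable
      (hε j).aestronglyMeasurable, hEε j]
    ring
  have v4 : (∫ ω, θ i ω * (∑ l, x j l * β ω l) ∂P) = 0 := by
    rw [(hind_fθ j i).symm.integral_fun_mul_eq_mul_integral (hθ i).aestronglyMeasurable
      (hfm j).aestronglyMeasurable, hEθ i]
    ring
  have v6 : (∫ ω, θ i ω * ε j ω ∂P) = 0 := by
    rw [(hind_εθ j i).symm.integral_fun_mul_eq_mul_integral (hθ i).aestronglyMeasurable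
      (hε j).aestronglyMeasurable, hEε j]
    ring
  have v7 : (∫ ω, ε i ω * (∑ l, x j l * β ω l) ∂P) = 0 := by
    rw [(hind_εf i j).integral_fun_mul_eq_mul_integral (hε i).aestronglyMeasurable
      (hfm j).aestronglyMeasurable, hEε i]
    ring
  have v8 : (∫ ω, ε i ω * θ j ω ∂P) = 0 := by
    rw [(hind_εθ i j).integral_fun_mul_eq_mul_integral (hε i).aestronglyMeasurable
      (hθ j).aestronglyMeasurable, hEε i]
    ring
  have v9 : (∫ ω, ε i ω * ε j ω ∂P) = 0 := by
    rw [hind_εε.integral_fun_mul_eq_mul_integral (hε i).aestronglyMeasurable (hε j).aestronglyMeasurable, hEε i]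
    ring
  -- putting the product integral together
  have hEyy : (∫ ω, y i ω * y j ω ∂P)
      = (∫ ω, (∑ l, x i l * β ω l) * (∑ l, x j l * β ω l) ∂P)
        + ∑ h, lam h ^ 2 * H h i j * (P {ω | c i ω = h ∧ c j ω = h}).toReal := by
    rw [hprod,
      integral_add E8 e9, integral_add E7 e8, integral_add E6 e7, integral_add E5 e6,
      integral_add E4 e5, integral_add E3 e4, integral_add E2 e3, integral_add e1 e2,
      v2, v3, v4, v6, v7, v8, v9, hEθθ]
    ring
  -- final computation
  rw [cov, hEyy, hEy i, hEy j, hEff,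
    (hfa (x i)).2.2, (hfa (x j)).2.2, (hfa (fun l => x i l + x j l)).2.2]
  have key : (∑ l, ∑ m, (x i l + x j l) * T l m * (x i m + x j m))
      = (∑ l, ∑ m, x i l * T l m * x i m) + (∑ l, ∑ m, x j l * T l m * x j m)
        + 2 * (∑ l, ∑ m, x i l * T l m * x j m) := by
    have hsym : ∀ a b, T b a = T a b := by
      intro a b
      have := hT.1.apply a b
      simpa [star_trivial] using this
    have expand : ∀ l m, (x i l + x j l) * T l m * (x i m + x j m)
        = x i l * T l m * x i m + x i l * T l m * x j m
          + x j l * T l m * x i m + x j l * T l m * x j m := fun l m => by ring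
    simp_rw [expand, Finset.sum_add_distrib]
    have swap : (∑ l, ∑ m, x j l * T l m * x i m) = ∑ l, ∑ m, x i l * T l m * x j m := by
      rw [Finset.sum_comm]
      refine Finset.sum_congr rfl fun a _ => Finset.sum_congr rfl fun b _ => ?_
      rw [hsym a b]
      ring
    rw [swap]
    ring
  have hmean : (∑ l, (x i l + x j l) * μv l)
      = (∑ l, x i l * μv l) + (∑ l, x j l * μv l) := by
    rw [← Finset.sum_add_distrib]
    exact Finset.sum_congr rfl fun l _ => by ring
  rw [key, hmean]
  ring
end
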